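/- arXiv:0711.1373 — 3 statements merged into one kernel-verified Lean document; each statement's English description precedes it below -/
import Mathlib

section
/- For every real t with 0 ≤ t ≤ 2π, the series ∑_{n=1}^∞ sin(nt)/n² converges and equals −∫_0^t ln(2 sin(ξ/2)) dξ. -/
open Real

open MeasureTheory intervalIntegral


lemma intInt_log01 : IntervalIntegrable Real.log volume 0 1 := by
  rw [intervalIntegrable_iff_integrableOn_Ioc_of_le zero_le_one]
  have h : IntegrableOn (fun x : ℝ => -Real.log x) (Set.Ioc 0 1) volume := by
    apply integrableOn_deriv_of_nonneg (g := fun x : ℝ => x - x * Real.log x)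
    · exact (continuous_id.sub Real.continuous_mul_log).continuousOn
    · intro x hx
      have h1 : HasDerivAt (fun x : ℝ => x - x * Real.log x) (1 - (Real.log x + 1)) x :=
        (hasDerivAt_id x).sub (Real.hasDerivAt_mul_log hx.1.ne')
      convert h1 using 1; ring
    · intro x hx
      simpa using Real.log_nonpos hx.1.le hx.2.le
  exact h.neg.congr (Filter.Eventually.of_forall fun x => neg_neg _)

lemma intInt_log (a : ℝ) (ha : 0 ≤ a) : IntervalIntegrable Real.log volume 0 a := by
  rcases le_or_gt a 1 with h | h
  · exact intInt_log01.mono_set' (by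
      rw [Set.uIoc_of_le ha, Set.uIoc_of_le zero_le_one]
      exact Set.Ioc_subset_Ioc_right h)
  · exact intInt_log01.trans (intervalIntegrable_log (by
      intro hmem; rw [Set.uIcc_of_le (by linarith)] at hmem
      exact absurd hmem.1 (by norm_num)))

lemma normSq_one_sub (x ξ : ℝ) :
    ‖1 - (x:ℂ) * Complex.exp (ξ * Complex.I)‖ ^ 2 = 1 - 2*x*Real.cos ξ + x^2 := by
  rw [Complex.sq_norm, Complex.normSq_apply]
  simp [Complex.exp_ofReal_mul_I_re, Complex.exp_ofReal_mul_I_im]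
  nlinarith [Real.sin_sq_add_cos_sq ξ]

lemma norm_one_sub_exp (ξ : ℝ) (h0 : 0 ≤ ξ) (h2 : ξ ≤ 2 * π) :
    ‖1 - Complex.exp (ξ * Complex.I)‖ = 2 * Real.sin (ξ / 2) := by
  have hs : 0 ≤ Real.sin (ξ / 2) :=
    Real.sin_nonneg_of_nonneg_of_le_pi (by linarith) (by linarith)
  have h1 : ‖1 - Complex.exp (ξ * Complex.I)‖ ^ 2 = (2 * Real.sin (ξ/2)) ^ 2 := by
    have h3 := normSq_one_sub 1 ξ
    simp only [Complex.ofReal_one, one_mul] at h3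
    rw [h3]
    have hh := Real.sin_sq_eq_half_sub (ξ/2)
    have h4 : 2 * (ξ/2) = ξ := by ring
    rw [h4] at hh
    nlinarith
  have hn : (0:ℝ) ≤ ‖1 - Complex.exp (ξ * Complex.I)‖ := norm_nonneg _
  nlinarith

lemma norm_ge (x ξ : ℝ) (hx : x ∈ Set.Ico (1/2 : ℝ) 1) :
    1 - x ≤ ‖1 - (x:ℂ) * Complex.exp (ξ * Complex.I)‖ := by
  have h := norm_sub_norm_le (1 : ℂ) ((x:ℂ) * Complex.exp (ξ * Complex.I))
  have hh : ‖(x:ℂ) * Complex.exp (ξ * Complex.I)‖ = x := by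
    rw [norm_mul, Complex.norm_real, Complex.norm_exp_ofReal_mul_I, mul_one,
      Real.norm_of_nonneg (by linarith [hx.1] : (0:ℝ) ≤ x)]
  rw [hh, norm_one] at h; linarith

lemma norm_le_two (x ξ : ℝ) (hx : x ∈ Set.Ico (1/2 : ℝ) 1) :
    ‖1 - (x:ℂ) * Complex.exp (ξ * Complex.I)‖ ≤ 2 := by
  have h := norm_sub_le (1 : ℂ) ((x:ℂ) * Complex.exp (ξ * Complex.I))
  have hh : ‖(x:ℂ) * Complex.exp (ξ * Complex.I)‖ = x := by
    rw [norm_mul, Complex.norm_real, Complex.norm_exp_ofReal_mul_I, mul_one,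
      Real.norm_of_nonneg (by linarith [hx.1] : (0:ℝ) ≤ x)]
  rw [hh, norm_one] at h
  linarith [hx.2.le]

lemma norm_compare (x ξ : ℝ) (hx : x ∈ Set.Ico (1/2 : ℝ) 1) :
    ‖1 - Complex.exp (ξ * Complex.I)‖ ≤ 2 * ‖1 - (x:ℂ) * Complex.exp (ξ * Complex.I)‖ := by
  have h1 := normSq_one_sub x ξ
  have h2 := normSq_one_sub 1 ξ
  simp only [Complex.ofReal_one, one_mul] at h2
  have hc := Real.neg_one_le_cos ξ
  have hc' := Real.cos_le_one ξ
  have hn1 : (0:ℝ) ≤ ‖1 - Complex.exp (ξ * Complex.I)‖ := norm_nonneg _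
  have hn2 : (0:ℝ) ≤ ‖1 - (x:ℂ) * Complex.exp (ξ * Complex.I)‖ := norm_nonneg _
  nlinarith [hx.1, hx.2.le]

lemma key_ineq (x ξ : ℝ) (hx : x ∈ Set.Ico (1/2 : ℝ) 1) (hξ : ξ ∈ Set.Ioo 0 (2*π)) :
    |Real.log ‖1 - (x:ℂ) * Complex.exp (ξ * Complex.I)‖| ≤
      Real.log 2 + |Real.log (2 * Real.sin (ξ/2))| := by
  set r := ‖1 - (x:ℂ) * Complex.exp (ξ * Complex.I)‖ with hr
  set s := 2 * Real.sin (ξ/2) with hs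
  have hspos : 0 < s := by
    have := Real.sin_pos_of_pos_of_lt_pi (x := ξ/2) (by linarith [hξ.1]) (by linarith [hξ.2])
    positivity
  have hrpos : 0 < r := lt_of_lt_of_le (by linarith [hx.2]) (norm_ge x ξ hx)
  have hsr : s ≤ 2 * r := by
    rw [hs, ← norm_one_sub_exp ξ hξ.1.le hξ.2.le]; exact norm_compare x ξ hx
  have h1 : Real.log r ≤ Real.log 2 := Real.log_le_log hrpos (norm_le_two x ξ hx)
  have h2 : Real.log s - Real.log 2 ≤ Real.log r := by
    have := Real.log_le_log (by positivity : (0:ℝ) < s/2) (by linarith : s/2 ≤ r)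
    rwa [Real.log_div hspos.ne' (by norm_num)] at this
  have ha := abs_nonneg (Real.log s)
  have hb := neg_abs_le (Real.log s)
  have hl2 : (0:ℝ) ≤ Real.log 2 := Real.log_nonneg (by norm_num)
  rw [abs_le]
  constructor <;> [linarith [le_abs_self (Real.log s)]; linarith]

lemma sin_lower (ξ : ℝ) (hξ : ξ ∈ Set.Ioo 0 (2*π)) :
    ξ * (2*π - ξ) / π^2 ≤ 2 * Real.sin (ξ/2) := by
  have hπ := Real.pi_pos
  rcases le_or_gt ξ π with h | h
  · have h0 := Real.mul_le_sin (x := ξ/2) (by linarith [hξ.1]) (by linarith)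
    have h' : ξ ≤ π * Real.sin (ξ/2) := by
      rw [← div_le_iff₀' hπ]
      calc ξ/π = 2/π * (ξ/2) := by ring
        _ ≤ Real.sin (ξ/2) := h0
    have hξ2 : 0 < ξ := hξ.1
    rw [div_le_iff₀ (by positivity)]
    nlinarith [mul_le_mul_of_nonneg_left h' (by linarith : (0:ℝ) ≤ 2*π)]
  · have h1 : Real.sin (ξ/2) = Real.sin (π - ξ/2) := (Real.sin_pi_sub _).symm
    have h0 := Real.mul_le_sin (x := π - ξ/2) (by linarith [hξ.2]) (by linarith)
    have h' : 2*π - ξ ≤ π * Real.sin (π - ξ/2) := by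
      rw [← div_le_iff₀' hπ]
      calc (2*π - ξ)/π = 2/π * (π - ξ/2) := by ring
        _ ≤ Real.sin (π - ξ/2) := h0
    rw [h1, div_le_iff₀ (by positivity)]
    nlinarith [mul_le_mul_of_nonneg_left h' (by linarith [hξ.2] : (0:ℝ) ≤ 2*π - ξ),
      hξ.2, mul_le_mul_of_nonneg_left h' hπ.le]

lemma log_bound (ξ : ℝ) (hξ : ξ ∈ Set.Ioc 0 (2*π)) :
    |Real.log (2 * Real.sin (ξ/2))| ≤
      Real.log 2 + 2 * Real.log π + |Real.log ξ| + |Real.log (2*π - ξ)| := by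
  have hπ := Real.pi_pos
  have hπ1 : (0:ℝ) ≤ Real.log π := Real.log_nonneg (by linarith [Real.pi_gt_three])
  have h2 : (0:ℝ) ≤ Real.log 2 := Real.log_nonneg (by norm_num)
  rcases eq_or_lt_of_le hξ.2 with rfl | hlt
  · rw [(by ring : 2*π/2 = π), Real.sin_pi, mul_zero, Real.log_zero, abs_zero]
    positivity
  have hmem : ξ ∈ Set.Ioo 0 (2*π) := ⟨hξ.1, hlt⟩
  have hlow := sin_lower ξ hmem
  have hs : 0 < Real.sin (ξ/2) :=
    Real.sin_pos_of_pos_of_lt_pi (by linarith [hξ.1]) (by linarith [hlt])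
  have hub : Real.log (2 * Real.sin (ξ/2)) ≤ Real.log 2 :=
    Real.log_le_log (by positivity) (by nlinarith [Real.sin_le_one (ξ/2)])
  have hlb : Real.log (ξ * (2*π - ξ) / π^2) ≤ Real.log (2 * Real.sin (ξ/2)) :=
    Real.log_le_log (div_pos (mul_pos hmem.1 (by linarith [hmem.2])) (by positivity)) hlow
  have heq : Real.log (ξ * (2*π - ξ) / π^2) =
      Real.log ξ + Real.log (2*π - ξ) - 2 * Real.log π := by
    rw [Real.log_div (mul_pos hmem.1 (by linarith [hmem.2] : (0:ℝ) < 2*π - ξ)).ne' (by positivity),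
      Real.log_mul hmem.1.ne' (by linarith [hmem.2] : (0:ℝ) < 2*π - ξ).ne', Real.log_pow]
    push_cast; ring
  rw [heq] at hlb
  rw [abs_le]
  have n1 := neg_abs_le (Real.log ξ)
  have n2 := neg_abs_le (Real.log (2*π - ξ))
  have p1 := abs_nonneg (Real.log ξ)
  have p2 := abs_nonneg (Real.log (2*π - ξ))
  constructor <;> linarith

lemma intInt_bound (t : ℝ) (ht0 : 0 ≤ t) (ht : t ≤ 2*π) :
    IntervalIntegrable (fun ξ => Real.log 2 + 2 * Real.log π + |Real.log ξ|
      + |Real.log (2*π - ξ)|) volume 0 t := by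
  have hπ := Real.pi_pos
  have h1 : IntervalIntegrable (fun ξ => |Real.log ξ|) volume 0 t := (intInt_log t ht0).abs
  have h2 : IntervalIntegrable (fun ξ : ℝ => |Real.log (2*π - ξ)|) volume 0 t := by
    have := ((intInt_log (2*π) (by linarith)).abs.comp_sub_left (2*π)).symm
    simp only [sub_zero, sub_self] at this
    exact this.mono_set' (by
      rw [Set.uIoc_of_le ht0, Set.uIoc_of_le (by linarith : (0:ℝ) ≤ 2*π)]
      exact Set.Ioc_subset_Ioc_right ht)
  exact ((intervalIntegrable_const.add h1).add h2)

lemma intInt_main (t : ℝ) (ht0 : 0 ≤ t) (ht : t ≤ 2*π) :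
    IntervalIntegrable (fun ξ => Real.log (2 * Real.sin (ξ/2))) volume 0 t := by
  apply (intInt_bound t ht0 ht).mono_fun
  · exact (Real.measurable_log.comp
      ((continuous_const.mul (Real.continuous_sin.comp
        (continuous_id.div_const 2))).measurable)).aestronglyMeasurable
  · have hmeas : MeasurableSet (Set.uIoc (0:ℝ) t) := measurableSet_uIoc
    filter_upwards [ae_restrict_mem hmeas] with ξ hmem
    rw [Set.uIoc_of_le ht0] at hmem
    have hb := log_bound ξ ⟨hmem.1, hmem.2.trans ht⟩
    have hπ := Real.pi_pos
    have hπ1 : (0:ℝ) ≤ Real.log π := Real.log_nonneg (by linarith [Real.pi_gt_three])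
    have h2 : (0:ℝ) ≤ Real.log 2 := Real.log_nonneg (by norm_num)
    rw [Real.norm_eq_abs, Real.norm_eq_abs]
    have p1 := abs_nonneg (Real.log ξ)
    have p2 := abs_nonneg (Real.log (2*π - ξ))
    have hbnn : (0:ℝ) ≤ Real.log 2 + 2 * Real.log π + |Real.log ξ| + |Real.log (2*π - ξ)| := by
      have := abs_nonneg (Real.log ξ); have := abs_nonneg (Real.log (2*π - ξ)); linarith
    rw [abs_of_nonneg hbnn]
    exact hb

lemma hasSum_cos_ser (x ξ : ℝ) (hx : |x| < 1) :
    HasSum (fun n : ℕ => x^(n+1) * Real.cos (((n:ℝ)+1) * ξ) / ((n:ℝ)+1))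
      (-Real.log ‖1 - (x:ℂ) * Complex.exp (ξ * Complex.I)‖) := by
  set z : ℂ := (x:ℂ) * Complex.exp (ξ * Complex.I) with hz
  have hznorm : ‖z‖ < 1 := by
    rw [hz, norm_mul, Complex.norm_real, Complex.norm_exp_ofReal_mul_I, mul_one]
    exact hx
  have h := Complex.hasSum_taylorSeries_neg_log hznorm
  have h2 := h.mapL Complex.reCLM
  have hterm : ∀ n : ℕ, Complex.reCLM (z ^ n / n) = x^n * Real.cos ((n:ℝ) * ξ) / n := by
    intro n
    have e1 : z ^ n = ((x^n : ℝ) : ℂ) * Complex.exp ((((n:ℝ) * ξ) : ℝ) * Complex.I) := by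
      rw [hz, mul_pow, ← Complex.exp_nat_mul]
      push_cast
      ring_nf
    simp only [Complex.reCLM_apply, e1]
    rw [div_eq_mul_inv, ← Complex.ofReal_natCast, ← Complex.ofReal_inv, mul_comm, ← mul_assoc]
    rw [mul_assoc, Complex.re_ofReal_mul, Complex.re_ofReal_mul, Complex.exp_ofReal_mul_I_re]
    ring
  have hre : Complex.reCLM (-Complex.log (1 - z)) =
      -Real.log ‖1 - z‖ := by
    simp [Complex.log_re]
  rw [hre] at h2
  simp only [hterm] at h2
  have h4 := (hasSum_nat_add_iff' (f := fun n : ℕ => x^n * Real.cos ((n:ℝ) * ξ) / n) 1).mpr h2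
  simp only [Finset.range_one, Finset.sum_singleton, Nat.cast_zero, div_zero, sub_zero] at h4
  convert h4 using 2 with n
  · rfl
  push_cast
  ring

lemma integral_cos_mul' (c t : ℝ) (hc : c ≠ 0) :
    ∫ ξ in (0:ℝ)..t, Real.cos (c*ξ) = Real.sin (c*t) / c := by
  rw [intervalIntegral.integral_comp_mul_left (fun y => Real.cos y) hc]
  simp [integral_cos, smul_eq_mul]
  ring

lemma stepX (t x : ℝ) (hx : x ∈ Set.Ico (1/2:ℝ) 1) :
    HasSum (fun n : ℕ => x^(n+1) * Real.sin (((n:ℝ)+1)*t) / ((n:ℝ)+1)^2)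
      (-∫ ξ in (0:ℝ)..t, Real.log ‖1 - (x:ℂ) * Complex.exp (ξ * Complex.I)‖) := by
  have hx0 : (0:ℝ) ≤ x := by linarith [hx.1]
  have hx1 : x < 1 := hx.2
  have hsummable : Summable (fun n : ℕ => x^(n+1)) := by
    simpa [pow_succ'] using (summable_geometric_of_lt_one hx0 hx1).mul_left x
  have h := intervalIntegral.hasSum_integral_of_dominated_convergence
    (μ := volume) (a := 0) (b := t)
    (F := fun (n : ℕ) (ξ : ℝ) => x^(n+1) * Real.cos (((n:ℝ)+1)*ξ) / ((n:ℝ)+1))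
    (f := fun ξ => -Real.log ‖1 - (x:ℂ) * Complex.exp (ξ * Complex.I)‖)
    (bound := fun n _ => x^(n+1))
    (fun n => (((continuous_const.mul (Real.continuous_cos.comp
      (continuous_const.mul continuous_id))).div_const _)).aestronglyMeasurable)
    (fun n => Filter.Eventually.of_forall fun ξ _ => by
      rw [Real.norm_eq_abs, abs_div, abs_mul, abs_pow, abs_of_nonneg hx0]
      have h1 : |Real.cos (((n:ℝ)+1)*ξ)| ≤ 1 := Real.abs_cos_le_one _
      have h2 : (1:ℝ) ≤ |(n:ℝ)+1| := by
        rw [abs_of_nonneg (by positivity)]; simp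
      have h3 : x^(n+1) * |Real.cos (((n:ℝ)+1)*ξ)| / |(n:ℝ)+1|
          ≤ x^(n+1) * 1 / 1 := by
        gcongr
      simpa using h3)
    (Filter.Eventually.of_forall fun ξ _ => hsummable)
    (by simpa using (intervalIntegrable_const :
      IntervalIntegrable (fun _ : ℝ => ∑' n : ℕ, x^(n+1)) volume 0 t))
    (Filter.Eventually.of_forall fun ξ _ =>
      hasSum_cos_ser x ξ (by rwa [abs_of_nonneg hx0]))
  have hint : ∀ n : ℕ, (∫ ξ in (0:ℝ)..t, x^(n+1) * Real.cos (((n:ℝ)+1)*ξ) / ((n:ℝ)+1))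
      = x^(n+1) * Real.sin (((n:ℝ)+1)*t) / ((n:ℝ)+1)^2 := by
    intro n
    have hc : ((n:ℝ)+1) ≠ 0 := by positivity
    have he : (fun ξ => x^(n+1) * Real.cos (((n:ℝ)+1)*ξ) / ((n:ℝ)+1))
        = fun ξ => (x^(n+1) / ((n:ℝ)+1)) * Real.cos (((n:ℝ)+1)*ξ) := by
      funext ξ; ring
    rw [he, intervalIntegral.integral_const_mul, integral_cos_mul' _ _ hc,
      div_mul_div_comm, ← sq]
  simp only [hint] at h
  rwa [intervalIntegral.integral_neg] at h

/-- For `0 ≤ t ≤ 2π`, `∑_{n=1}^∞ sin(nt)/n² = -∫_0^t ln(2 sin(ξ/2)) dξ`. -/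
theorem sum_sin_div_sq (t : ℝ) (ht0 : 0 ≤ t) (ht : t ≤ 2 * π) :
    HasSum (fun n : ℕ => Real.sin ((n + 1) * t) / ((n : ℝ) + 1) ^ 2)
      (-∫ ξ in (0:ℝ)..t, Real.log (2 * Real.sin (ξ / 2))) := by
  have hπ := Real.pi_pos
  -- the approximating sequence
  set xk : ℕ → ℝ := fun k => 1 - 1/((k:ℝ)+2) with hxk_def
  have hxk : ∀ k, xk k ∈ Set.Ico (1/2:ℝ) 1 := by
    intro k
    have h1 : (0:ℝ) < (k:ℝ)+2 := by positivity
    have h2 : 1/((k:ℝ)+2) ≤ 1/2 := by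
      apply div_le_div_of_nonneg_left (by norm_num) (by norm_num) (by
        have : (0:ℝ) ≤ (k:ℝ) := Nat.cast_nonneg k
        linarith)
    constructor
    · simp only [hxk_def]; linarith
    · simp only [hxk_def]; have : 0 < 1/((k:ℝ)+2) := by positivity
      linarith
  have htend : Filter.Tendsto xk Filter.atTop (nhds 1) := by
    have h0 : Filter.Tendsto (fun k : ℕ => 1/((k:ℝ)+2)) Filter.atTop (nhds 0) := by
      apply squeeze_zero (fun k => by positivity) (fun k => ?_)
        tendsto_one_div_add_atTop_nhds_zero_nat
      have hk : (0:ℝ) ≤ (k:ℝ) := Nat.cast_nonneg k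
      gcongr
      all_goals first | positivity | linarith
    have h1 := h0.const_sub 1
    simpa [hxk_def] using h1
  -- summability of the target series
  have hs2 : Summable (fun n : ℕ => 1/((n:ℝ)+1)^2) := by
    have h0 : Summable (fun n : ℕ => 1 / ((n:ℝ))^2) :=
      Real.summable_one_div_nat_pow.mpr one_lt_two
    exact ((summable_nat_add_iff 1).mpr h0).congr (fun n => by push_cast; ring)
  have hgsum : Summable (fun n : ℕ => Real.sin (((n:ℝ) + 1) * t) / ((n : ℝ) + 1) ^ 2) := by
    apply Summable.of_norm_bounded hs2
    intro n
    rw [Real.norm_eq_abs, abs_div, abs_of_nonneg (by positivity : (0:ℝ) ≤ ((n:ℝ)+1)^2)]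
    have := Real.abs_sin_le_one (((n:ℝ)+1) * t)
    rw [div_le_div_iff₀ (by positivity) (by positivity)]
    nlinarith [sq_nonneg ((n:ℝ)+1)]
  -- Tannery
  have hTan : Filter.Tendsto
      (fun k => ∑' n : ℕ, (xk k)^(n+1) * Real.sin (((n:ℝ)+1)*t) / ((n:ℝ)+1)^2)
      Filter.atTop (nhds (∑' n : ℕ, Real.sin (((n:ℝ)+1)*t) / ((n:ℝ)+1)^2)) := by
    apply tendsto_tsum_of_dominated_convergence hs2
    · intro n
      have h := ((htend.pow (n+1)).mul_const (Real.sin (((n:ℝ)+1)*t))).div_const (((n:ℝ)+1)^2)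
      simpa using h
    · apply Filter.Eventually.of_forall
      intro k n
      have hx := hxk k
      have hx0 : (0:ℝ) ≤ xk k := le_trans (by norm_num) hx.1
      rw [Real.norm_eq_abs, abs_div, abs_mul, abs_pow,
        abs_of_nonneg hx0, abs_of_nonneg (by positivity : (0:ℝ) ≤ ((n:ℝ)+1)^2)]
      have h1 : (xk k)^(n+1) ≤ 1 := pow_le_one₀ hx0 hx.2.le
      have h2 : |Real.sin (((n:ℝ)+1)*t)| ≤ 1 := Real.abs_sin_le_one _
      have h3 : (xk k)^(n+1) * |Real.sin (((n:ℝ)+1)*t)| ≤ 1 :=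
        mul_le_one₀ h1 (abs_nonneg _) h2
      have h4 : (0:ℝ) < ((n:ℝ)+1)^2 := by positivity
      rw [div_le_div_iff₀ h4 h4]
      nlinarith
  -- a.e. avoid 2π
  have hne : ∀ᵐ ξ : ℝ ∂(volume : Measure ℝ), ξ ≠ 2*π := by
    simpa [ae_iff, not_not, Set.setOf_eq_eq_singleton] using measure_singleton (α := ℝ) (2*π)
  -- DCT
  have hDCT : Filter.Tendsto
      (fun k => ∫ ξ in (0:ℝ)..t, Real.log ‖1 - ((xk k : ℝ):ℂ) * Complex.exp (ξ * Complex.I)‖)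
      Filter.atTop (nhds (∫ ξ in (0:ℝ)..t, Real.log (2 * Real.sin (ξ/2)))) := by
    apply intervalIntegral.tendsto_integral_filter_of_dominated_convergence
      (bound := fun ξ => Real.log 2 + (Real.log 2 + 2 * Real.log π + |Real.log ξ|
        + |Real.log (2*π - ξ)|))
    · apply Filter.Eventually.of_forall
      intro k
      apply Measurable.aestronglyMeasurable
      apply Real.measurable_log.comp
      apply Continuous.measurable
      fun_prop
    · apply Filter.Eventually.of_forall
      intro k
      filter_upwards [hne] with ξ hξne hmem
      rw [Set.uIoc_of_le ht0] at hmem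
      have hξ : ξ ∈ Set.Ioo 0 (2*π) := ⟨hmem.1, lt_of_le_of_ne (hmem.2.trans ht) hξne⟩
      have h1 := key_ineq (xk k) ξ (hxk k) hξ
      have h2 := log_bound ξ ⟨hξ.1, hξ.2.le⟩
      rw [Real.norm_eq_abs]
      linarith
    · exact intervalIntegrable_const.add (intInt_bound t ht0 ht)
    · filter_upwards [hne] with ξ hξne hmem
      rw [Set.uIoc_of_le ht0] at hmem
      have hξ : ξ ∈ Set.Ioo 0 (2*π) := ⟨hmem.1, lt_of_le_of_ne (hmem.2.trans ht) hξne⟩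
      have hspos : 0 < 2 * Real.sin (ξ/2) := by
        have := Real.sin_pos_of_pos_of_lt_pi (x := ξ/2) (by linarith [hξ.1]) (by linarith [hξ.2])
        positivity
      have hval : ‖1 - Complex.exp (ξ * Complex.I)‖ = 2 * Real.sin (ξ/2) :=
        norm_one_sub_exp ξ hξ.1.le hξ.2.le
      have hcont : Continuous (fun x : ℝ => ‖1 - (x:ℂ) * Complex.exp (ξ * Complex.I)‖) := by
        fun_prop
      have h1 : Filter.Tendsto (fun x : ℝ => ‖1 - (x:ℂ) * Complex.exp (ξ * Complex.I)‖)
          (nhds 1) (nhds (2 * Real.sin (ξ/2))) := by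
        have := hcont.tendsto 1
        simpa [hval] using this
      have h2 : Filter.Tendsto Real.log (nhds (2 * Real.sin (ξ/2)))
          (nhds (Real.log (2 * Real.sin (ξ/2)))) := (Real.continuousAt_log hspos.ne')
      exact (h2.comp h1).comp htend
  -- combine
  have hEqSeq : ∀ k, ∑' n : ℕ, (xk k)^(n+1) * Real.sin (((n:ℝ)+1)*t) / ((n:ℝ)+1)^2
      = -∫ ξ in (0:ℝ)..t, Real.log ‖1 - ((xk k : ℝ):ℂ) * Complex.exp (ξ * Complex.I)‖ :=
    fun k => (stepX t (xk k) (hxk k)).tsum_eq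
  have hfinal : (∑' n : ℕ, Real.sin (((n:ℝ)+1)*t) / ((n:ℝ)+1)^2)
      = -∫ ξ in (0:ℝ)..t, Real.log (2 * Real.sin (ξ/2)) := by
    have h5 := hDCT.neg
    have h6 := Filter.Tendsto.congr (fun k => (hEqSeq k).symm) h5
    exact tendsto_nhds_unique hTan h6
  exact hfinal ▸ hgsum.hasSum
end

section
/- (Sokal) Let D be a nonempty open connected subset of ℂ, let z₀ ∈ D, let (g_n) be a sequence of functions analytic on D, and let (a_n) be a sequence of positive real numbers such that the functions |g_n|^{a_n} are uniformly bounded on every compact subset of D. Suppose there does not exist an open neighborhood V ⊆ D of z₀ and a function v on V that is either harmonic on V or identically −∞ such that liminf_{n→∞} a_n ln|g_n(z)| ≤ v(z) ≤ limsup_{n→∞} a_n ln|g_n(z)| for all z ∈ V. Then for every ε > 0 there exists N such that for all n ≥ N the function g_n has a zero z_n* with |z_n* − z₀| < ε; in particular there exist zeros z_n* of g_n with z_n* → z₀. -/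
open Complex Filter Metric Topology Real intervalIntegral

/-- `v` is harmonic on `V`: twice continuously differentiable with vanishing Laplacian,
where the Laplacian is the sum of the second directional derivatives in the directions
`1` and `i`. -/
def HarmonicOnSet (v : ℂ → ℝ) (V : Set ℂ) : Prop :=
  ContDiffOn ℝ 2 v V ∧ ∀ z ∈ V,
    fderiv ℝ (fun w => fderiv ℝ v w 1) z 1 +
      fderiv ℝ (fun w => fderiv ℝ v w Complex.I) z Complex.I = 0

/-- `ln|w|` as an extended real number, interpreted as `-∞` when `w = 0`. -/
noncomputable def logAbsE (w : ℂ) : EReal := if w = 0 then ⊥ else (Real.log ‖w‖ : EReal)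

lemma fderiv_re_comp_apply {G : ℂ → ℂ} {w : ℂ} (h : DifferentiableAt ℂ G w) (y : ℂ) :
    fderiv ℝ (fun x => (G x).re) w y = (y * deriv G w).re := by
  have h1 : HasFDerivAt G ((ContinuousLinearMap.smulRight (1 : ℂ →L[ℂ] ℂ) (deriv G w))) w :=
    h.hasDerivAt.hasFDerivAt
  have h3 : HasFDerivAt (fun x => (G x).re)
      (Complex.reCLM.comp ((ContinuousLinearMap.smulRight (1 : ℂ →L[ℂ] ℂ)
        (deriv G w)).restrictScalars ℝ)) w :=
    Complex.reCLM.hasFDerivAt.comp w (h1.restrictScalars ℝ)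
  rw [h3.fderiv]
  simp [smul_eq_mul, mul_comm]

lemma laplacian_re_holo {H : ℂ → ℂ} {N : Set ℂ} (hN : IsOpen N) (hH : DifferentiableOn ℂ H N)
    {v : ℂ → ℝ} (hv : ∀ z ∈ N, v z = (H z).re) {z₁ : ℂ} (hz₁ : z₁ ∈ N) :
    ContDiffAt ℝ 2 v z₁ ∧
      fderiv ℝ (fun w => fderiv ℝ v w 1) z₁ 1 + fderiv ℝ (fun w => fderiv ℝ v w I) z₁ I = 0 := by
  have hAn : AnalyticOnNhd ℂ H N := hH.analyticOnNhd hN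
  have hNz : N ∈ 𝓝 z₁ := hN.mem_nhds hz₁
  have hEv : v =ᶠ[𝓝 z₁] fun z => (H z).re := Filter.eventually_of_mem hNz hv
  have hdH : ∀ z ∈ N, DifferentiableAt ℂ H z := fun z hz => (hAn z hz).differentiableAt
  have hdH' : ∀ z ∈ N, DifferentiableAt ℂ (deriv H) z := fun z hz =>
    ((hAn.deriv) z hz).differentiableAt
  constructor
  · have cd : ContDiffAt ℝ 2 (fun z => (H z).re) z₁ := by
      have c1 : ContDiffOn ℂ 2 H N := hAn.contDiffOn hN.uniqueDiffOn
      have c2 : ContDiffOn ℝ 2 H N := c1.restrict_scalars ℝ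
      have c3 : ContDiffOn ℝ 2 (fun z => (H z).re) N :=
        Complex.reCLM.contDiff.comp_contDiffOn c2
      exact c3.contDiffAt hNz
    exact cd.congr_of_eventuallyEq hEv
  · have D1 : ∀ z ∈ N, fderiv ℝ v z = fderiv ℝ (fun x => (H x).re) z := fun z hz =>
      Filter.EventuallyEq.fderiv_eq (Filter.eventually_of_mem (hN.mem_nhds hz) hv)
    have e1 : (fun w => fderiv ℝ v w 1) =ᶠ[𝓝 z₁] fun w => (deriv H w).re := by
      filter_upwards [hNz] with w hw
      rw [D1 w hw, fderiv_re_comp_apply (hdH w hw), one_mul]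
    have e2 : (fun w => fderiv ℝ v w I) =ᶠ[𝓝 z₁] fun w => (I * deriv H w).re := by
      filter_upwards [hNz] with w hw
      rw [D1 w hw, fderiv_re_comp_apply (hdH w hw)]
    rw [e1.fderiv_eq, e2.fderiv_eq]
    have dG2 : DifferentiableAt ℂ (fun w => I * deriv H w) z₁ :=
      (hdH' z₁ hz₁).const_mul I
    rw [fderiv_re_comp_apply (hdH' z₁ hz₁), fderiv_re_comp_apply dG2, deriv_const_mul I (hdH' z₁ hz₁)]
    have : I * (I * deriv (deriv H) z₁) = -(deriv (deriv H) z₁) := by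
      rw [← mul_assoc, Complex.I_mul_I, neg_one_mul]
    rw [this, one_mul]
    simp

lemma harmonic_log_norm {f : ℂ → ℂ} {V : Set ℂ} (hV : IsOpen V) (hf : DifferentiableOn ℂ f V)
    (hne : ∀ z ∈ V, f z ≠ 0) :
    HarmonicOnSet (fun z => Real.log ‖f z‖) V := by
  have key : ∀ z₁ ∈ V, ContDiffAt ℝ 2 (fun z => Real.log ‖f z‖) z₁ ∧
      fderiv ℝ (fun w => fderiv ℝ (fun z => Real.log ‖f z‖) w 1) z₁ 1 +
        fderiv ℝ (fun w => fderiv ℝ (fun z => Real.log ‖f z‖) w Complex.I) z₁ Complex.I = 0 := by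
    intro z₁ hz₁
    set e : ℂ := (((‖f z₁‖ : ℝ) : ℂ))⁻¹ * (starRingEnd ℂ) (f z₁) with he
    have hfz₁ : f z₁ ≠ 0 := hne z₁ hz₁
    have habs : ‖f z₁‖ ≠ 0 := by simpa using hfz₁
    have habse : ‖e‖ = 1 := by
      rw [he, norm_mul, norm_inv, Complex.norm_real, Complex.norm_conj, norm_norm]
      exact inv_mul_cancel₀ habs
    have hz₁e : f z₁ * e ∈ Complex.slitPlane := by
      have : f z₁ * e = ((‖f z₁‖ : ℝ) : ℂ) := by
        rw [he]
        rw [show f z₁ * ((((‖f z₁‖ : ℝ) : ℂ))⁻¹ * (starRingEnd ℂ) (f z₁))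
          = (((‖f z₁‖ : ℝ) : ℂ))⁻¹ * (f z₁ * (starRingEnd ℂ) (f z₁)) by ring]
        rw [Complex.mul_conj, Complex.normSq_eq_norm_sq]
        push_cast
        field_simp [habs]
      rw [this]
      exact Complex.mem_slitPlane_iff.2 (Or.inl (by simpa using (norm_pos_iff.mpr hfz₁)))
    set N : Set ℂ := V ∩ (fun z => f z * e) ⁻¹' Complex.slitPlane with hNdef
    have hNopen : IsOpen N :=
      ContinuousOn.isOpen_inter_preimage (hf.continuousOn.mul continuousOn_const) hV
        Complex.isOpen_slitPlane
    have hz₁N : z₁ ∈ N := ⟨hz₁, hz₁e⟩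
    have hH : DifferentiableOn ℂ (fun z => Complex.log (f z * e)) N := fun z hz =>
      ((hf.mono Set.inter_subset_left z hz).mul_const e).clog hz.2
    have hv : ∀ z ∈ N, Real.log ‖f z‖ = (Complex.log (f z * e)).re := by
      intro z hz
      rw [Complex.log_re, norm_mul, habse, mul_one]
    exact laplacian_re_holo hNopen hH hv hz₁N
  exact ⟨fun z hz => (key z hz).1.contDiffWithinAt, fun z hz => (key z hz).2⟩

lemma differentiableOn_of_exp_eq {U : Set ℂ} (hU : IsOpen U) {f h : ℂ → ℂ}
    (hf : DifferentiableOn ℂ f U) (hne : ∀ z ∈ U, f z ≠ 0)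
    (hcont : ContinuousOn h U) (hexp : ∀ z ∈ U, Complex.exp (h z) = f z) :
    DifferentiableOn ℂ h U := by
  intro z₁ hz₁
  have hfz₁ : f z₁ ≠ 0 := hne z₁ hz₁
  set φ : ℂ → ℂ := fun ζ => h z₁ + Complex.log (ζ * (f z₁)⁻¹) with hφ
  have hone : f z₁ * (f z₁)⁻¹ = 1 := mul_inv_cancel₀ hfz₁
  have h1s : (1 : ℂ) ∈ Complex.slitPlane := Complex.one_mem_slitPlane
  have hφd : DifferentiableAt ℂ φ (f z₁) := by
    apply DifferentiableAt.const_add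
    exact (differentiableAt_id.mul_const _).clog (by simpa [hone] using h1s)
  have hfd : DifferentiableAt ℂ f z₁ := hf.differentiableAt (hU.mem_nhds hz₁)
  have hφe : ∀ ζ : ℂ, ζ * (f z₁)⁻¹ ∈ Complex.slitPlane → Complex.exp (φ ζ) = ζ := by
    intro ζ hζ
    have hζne : ζ * (f z₁)⁻¹ ≠ 0 := Complex.slitPlane_ne_zero hζ
    rw [hφ]
    have hζ0 : ζ ≠ 0 := fun h0 => hζne (by simp [h0])
    rw [Complex.exp_add, Complex.exp_log hζne, hexp z₁ hz₁]
    field_simp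
  -- eventually h z = φ (f z)
  have hev : ∀ᶠ z in 𝓝 z₁, h z = φ (f z) := by
    have hcU : ∀ᶠ z in 𝓝 z₁, z ∈ U := hU.mem_nhds hz₁
    have hcs : ∀ᶠ z in 𝓝 z₁, f z * (f z₁)⁻¹ ∈ Complex.slitPlane := by
      have : ContinuousAt (fun z => f z * (f z₁)⁻¹) z₁ := (hfd.continuousAt).mul_const _
      exact this.eventually_mem (Complex.isOpen_slitPlane.mem_nhds (by rw [hone]; exact h1s))
    have hηc : ContinuousAt (fun z => h z - φ (f z)) z₁ := by
      exact ((hcont.continuousAt (hU.mem_nhds hz₁))).sub (hφd.continuousAt.comp hfd.continuousAt)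
    have hη0 : h z₁ - φ (f z₁) = 0 := by
      rw [hφ]; simp only [hone, Complex.log_one]; ring
    have hsmall : ∀ᶠ z in 𝓝 z₁, ‖h z - φ (f z)‖ < 2 * Real.pi := by
      have := hηc.eventually_mem (Metric.ball_mem_nhds _ (by positivity : (0:ℝ) < 2 * Real.pi))
      rw [hη0] at this
      simpa [Metric.mem_ball, dist_eq_norm] using this
    filter_upwards [hcU, hcs, hsmall] with z hzU hzs hzsm
    have hexpη : Complex.exp (h z - φ (f z)) = 1 := by
      rw [Complex.exp_sub, hexp z hzU, hφe (f z) hzs, div_self (hne z hzU)]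
    obtain ⟨n, hn⟩ := Complex.exp_eq_one_iff.1 hexpη
    have : ‖h z - φ (f z)‖ = |(n : ℝ)| * (2 * Real.pi) := by
      rw [hn]
      simp [abs_mul, abs_of_pos Real.pi_pos,
        mul_comm, mul_assoc, mul_left_comm]
    rw [this] at hzsm
    have hn0 : n = 0 := by
      by_contra hn0
      have : (1:ℝ) ≤ |(n:ℝ)| := by
        exact_mod_cast Int.one_le_abs (by omega)
      nlinarith [Real.pi_pos]
    rw [hn0] at hn
    simp at hn
    rw [sub_eq_zero] at hn
    exact hn
  exact ((hφd.comp z₁ hfd).congr_of_eventuallyEq hev).differentiableWithinAt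

lemma exists_log_ball {c : ℂ} {R : ℝ} {f : ℂ → ℂ} (hf : DifferentiableOn ℂ f (ball c R))
    (hne : ∀ z ∈ ball c R, f z ≠ 0) :
    ∃ h : ℂ → ℂ, DifferentiableOn ℂ h (ball c R) ∧ ∀ z ∈ ball c R, Complex.exp (h z) = f z := by
  by_cases hR : 0 < R
  swap
  · refine ⟨0, fun z hz => ?_, fun z hz => ?_⟩ <;>
      · rw [Metric.ball_eq_empty.2 (not_lt.1 hR)] at hz; exact absurd hz (Set.notMem_empty z)
  have hcball : c ∈ ball c R := mem_ball_self hR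
  have hfc : f c ≠ 0 := hne c hcball
  set L₀ : ℂ := Complex.log (f c) with hL₀
  set pr : ℝ → ℝ := fun t => max 0 (min 1 t) with hpr
  have hpr_cont : Continuous pr := continuous_const.max (continuous_const.min continuous_id)
  have hpr_mem : ∀ t, pr t ∈ Set.Icc (0:ℝ) 1 :=
    fun t => ⟨le_max_left _ _, max_le zero_le_one (min_le_left _ _)⟩
  have hpr_eq : ∀ t ∈ Set.Icc (0:ℝ) 1, pr t = t := by
    intro t ht
    simp only [hpr, min_eq_right ht.2, max_eq_right ht.1]
  set p : ℂ → ℝ → ℂ := fun z t => c + ((pr t : ℝ) : ℂ) * (z - c) with hpdef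
  have hp_mem : ∀ z ∈ ball c R, ∀ t : ℝ, p z t ∈ ball c R := by
    intro z hz t
    have h1 : ‖p z t - c‖ = pr t * ‖z - c‖ := by
      simp only [hpdef, add_sub_cancel_left, norm_mul, Complex.norm_real,
        Real.norm_eq_abs, _root_.abs_of_nonneg (hpr_mem t).1]
    rw [mem_ball, dist_eq_norm] at hz ⊢
    rw [h1]
    calc pr t * ‖z - c‖ ≤ 1 * ‖z - c‖ := by
          apply mul_le_mul_of_nonneg_right (hpr_mem t).2 (norm_nonneg _)
      _ = ‖z - c‖ := one_mul _
      _ < R := hz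
  have hf' : ContinuousOn (deriv f) (ball c R) :=
    ((hf.analyticOnNhd isOpen_ball).deriv).continuousOn
  set φ : ℂ → ℝ → ℂ := fun z t => (z - c) * (deriv f (p z t) * (f (p z t))⁻¹) with hφdef
  -- joint continuity on the subtype
  have hφj : Continuous (Function.uncurry fun (w : ball c R) (t : ℝ) => φ (w : ℂ) t) := by
    have hPc : Continuous (fun q : ball c R × ℝ => p (q.1 : ℂ) q.2) := by
      apply continuous_const.add
      exact ((Complex.continuous_ofReal.comp (hpr_cont.comp continuous_snd)).mul
        ((continuous_subtype_val.comp continuous_fst).sub continuous_const))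
    have hPmem : ∀ q : ball c R × ℝ, p (q.1 : ℂ) q.2 ∈ ball c R :=
      fun q => hp_mem _ q.1.2 q.2
    have hd : Continuous (fun q : ball c R × ℝ => deriv f (p (q.1 : ℂ) q.2)) :=
      hf'.comp_continuous hPc hPmem
    have hfP : Continuous (fun q : ball c R × ℝ => f (p (q.1 : ℂ) q.2)) :=
      hf.continuousOn.comp_continuous hPc hPmem
    have hfPne : ∀ q : ball c R × ℝ, f (p (q.1 : ℂ) q.2) ≠ 0 :=
      fun q => hne _ (hPmem q)
    exact (((continuous_subtype_val.comp continuous_fst).sub continuous_const).mul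
      (hd.mul (hfP.inv₀ hfPne)))
  -- continuity of each slice
  have hφz : ∀ z ∈ ball c R, Continuous (φ z) := by
    intro z hz
    have : Continuous (fun t : ℝ => ((⟨z, hz⟩ : ball c R), t)) :=
      (continuous_const.prodMk continuous_id)
    exact hφj.comp this
  set h : ℂ → ℂ := fun z => L₀ + ∫ t in (0:ℝ)..1, φ z t with hh
  have hcont : ContinuousOn h (ball c R) := by
    rw [continuousOn_iff_continuous_restrict]
    apply continuous_const.add
    haveI : LocallyCompactSpace (ball c R) := isOpen_ball.locallyCompactSpace
    exact continuous_parametric_intervalIntegral_of_continuous' (μ := MeasureTheory.volume) hφj 0 1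
  have hexp : ∀ z ∈ ball c R, Complex.exp (h z) = f z := by
    intro z hz
    set γ : ℝ → ℂ := fun s => c + (s : ℂ) * (z - c) with hγ
    have hγ_mem : ∀ s ∈ Set.Icc (0:ℝ) 1, γ s ∈ ball c R := by
      intro s hs
      have h2 : p z s = γ s := by simp only [hpdef, hγ]; rw [hpr_eq s hs]
      rw [← h2]; exact hp_mem z hz s
    set w : ℝ → ℂ := fun s => ∫ t in (0:ℝ)..s, φ z t with hw
    have hwd : ∀ s : ℝ, HasDerivAt w (φ z s) s := by
      intro s
      apply intervalIntegral.integral_hasDerivAt_right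
        (((hφz z hz)).intervalIntegrable _ _)
        ((hφz z hz).stronglyMeasurableAtFilter _ _)
        (hφz z hz).continuousAt
    have hγd : ∀ s : ℝ, HasDerivAt γ (z - c) s := by
      intro s
      have h1 : HasDerivAt (fun s : ℝ => (s : ℂ)) 1 s := Complex.ofRealCLM.hasDerivAt
      have := (h1.mul_const (z - c)).const_add c; rw [one_mul] at this; exact this
    set ψ : ℝ → ℂ := fun s => f (γ s) * Complex.exp (-(L₀ + w s)) with hψdef
    have hψd : ∀ s ∈ Set.Icc (0:ℝ) 1, HasDerivAt ψ 0 s := by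
      intro s hs
      have hγs : γ s ∈ ball c R := hγ_mem s hs
      have hfd : DifferentiableAt ℂ f (γ s) := hf.differentiableAt (isOpen_ball.mem_nhds hγs)
      have hfγ : HasDerivAt (fun s => f (γ s)) ((z - c) • deriv f (γ s)) s :=
        (hfd.hasDerivAt).scomp s (hγd s)
      have hE : HasDerivAt (fun s => Complex.exp (-(L₀ + w s)))
          (Complex.exp (-(L₀ + w s)) * (-(φ z s))) s := by
        exact (((hwd s).const_add L₀).neg).cexp
      have := hfγ.mul hE
      refine HasDerivAt.congr_deriv this ?_
      have hφs : φ z s = (z - c) * (deriv f (γ s) * (f (γ s))⁻¹) := by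
        simp only [hφdef, hpdef, hγ]
        rw [hpr_eq s hs]
      rw [hφs, smul_eq_mul]
      have hfγne : f (γ s) ≠ 0 := hne _ hγs
      field_simp
      ring
    have hψ_eq : ψ 1 = ψ 0 := by
      have hcont' : ContinuousOn ψ (Set.Icc 0 1) :=
        fun s hs => (hψd s hs).continuousAt.continuousWithinAt
      have := constant_of_has_deriv_right_zero hcont'
        (fun s hs => (hψd s (Set.mem_Icc_of_Ico hs)).hasDerivWithinAt)
      exact this 1 ⟨zero_le_one, le_refl 1⟩
    have hψ0 : ψ 0 = 1 := by
      rw [hψdef]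
      simp only [hγ, hw]
      rw [intervalIntegral.integral_same]
      simp [hL₀, Complex.exp_neg, Complex.exp_log hfc, mul_inv_cancel₀ hfc]
    have hψ1 : f z * Complex.exp (-(h z)) = 1 := by
      rw [← hψ0, ← hψ_eq, hψdef]
      simp only [hγ, hw, hh]
      norm_num
    rw [Complex.exp_neg] at hψ1
    field_simp at hψ1
    exact hψ1.symm
  exact ⟨h, differentiableOn_of_exp_eq isOpen_ball hf hne hcont hexp, hexp⟩

/-- Sokal's theorem: let `D` be a nonempty open connected subset of `ℂ`, `z₀ ∈ D`,
`(gₙ)` analytic on `D`, and `(aₙ)` positive reals with `|gₙ|^{aₙ}` uniformly bounded on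
compact subsets of `D`.  If there is no neighborhood `V ⊆ D` of `z₀` and function `v` on
`V`, either harmonic or identically `-∞`, with
`liminf aₙ ln|gₙ(z)| ≤ v(z) ≤ limsup aₙ ln|gₙ(z)|` on `V`, then for every `ε > 0`,
eventually every `gₙ` has a zero within `ε` of `z₀`. -/
theorem sokal_zero_accumulation
    (D : Set ℂ) (hDopen : IsOpen D) (hDconn : IsConnected D)
    (z₀ : ℂ) (hz₀ : z₀ ∈ D)
    (g : ℕ → ℂ → ℂ) (hg : ∀ n, DifferentiableOn ℂ (g n) D)
    (a : ℕ → ℝ) (ha : ∀ n, 0 < a n)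
    (hbd : ∀ K ⊆ D, IsCompact K → ∃ M : ℝ, ∀ n, ∀ z ∈ K, ‖g n z‖ ^ a n ≤ M)
    (hno : ¬ ∃ (V : Set ℂ) (v : ℂ → EReal), IsOpen V ∧ z₀ ∈ V ∧ V ⊆ D ∧
      ((∃ h : ℂ → ℝ, HarmonicOnSet h V ∧ ∀ z ∈ V, v z = (h z : EReal)) ∨
        (∀ z ∈ V, v z = ⊥)) ∧
      (∀ z ∈ V,
        liminf (fun n => (a n : EReal) * logAbsE (g n z)) atTop ≤ v z ∧
        v z ≤ limsup (fun n => (a n : EReal) * logAbsE (g n z)) atTop)) :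
    ∀ ε > 0, ∃ N : ℕ, ∀ n ≥ N, ∃ z, z ∈ D ∧ g n z = 0 ∧ ‖z - z₀‖ < ε := by
  intro ε hε
  classical
  by_contra hcon
  push_neg at hcon
  -- the set of "bad" indices: no zero within ε of z₀
  set S : Set ℕ := {n | ∀ z ∈ D, g n z = 0 → ε ≤ ‖z - z₀‖} with hS
  have hfreq : ∃ᶠ n in atTop, n ∈ S := by
    rw [frequently_atTop]
    intro N
    obtain ⟨n, hnN, hn⟩ := hcon N
    exact ⟨n, hnN, hn⟩
  haveI hLne : (atTop ⊓ 𝓟 S).NeBot := frequently_mem_iff_neBot.1 hfreq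
  set U : Ultrafilter ℕ := Ultrafilter.of (atTop ⊓ 𝓟 S) with hU
  have hUle : (U : Filter ℕ) ≤ atTop := (Ultrafilter.of_le _).trans inf_le_left
  have hUS : S ∈ U := (Ultrafilter.of_le _).trans inf_le_right (Filter.mem_principal_self S)
  -- radius
  obtain ⟨δ, hδpos, hδ⟩ := Metric.isOpen_iff.1 hDopen z₀ hz₀
  set r : ℝ := min (δ/2) (ε/2) with hr
  have hrpos : 0 < r := lt_min (by linarith) (by linarith)
  have hballD : closedBall z₀ r ⊆ D := by
    refine (closedBall_subset_ball ?_).trans hδ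
    calc r ≤ δ/2 := min_le_left _ _
      _ < δ := by linarith
  set B : Set ℂ := ball z₀ r with hB
  have hBD : B ⊆ D := (ball_subset_closedBall).trans hballD
  have hgne : ∀ n ∈ S, ∀ z ∈ closedBall z₀ r, g n z ≠ 0 := by
    intro n hn z hz h0
    have h1 : ε ≤ ‖z - z₀‖ := hn z (hballD hz) h0
    have h2 : ‖z - z₀‖ ≤ r := by rwa [mem_closedBall, dist_eq_norm] at hz
    have h3 : r ≤ ε/2 := min_le_right _ _
    linarith
  obtain ⟨M, hM⟩ := hbd (closedBall z₀ r) hballD (isCompact_closedBall _ _)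
  set M' : ℝ := max M 1 with hM'
  have hM1 : 1 ≤ M' := le_max_right _ _
  -- logarithms
  have hlogex : ∀ n, ∃ h : ℂ → ℂ, n ∈ S →
      (DifferentiableOn ℂ h B ∧ ∀ z ∈ B, Complex.exp (h z) = g n z) := by
    intro n
    by_cases hn : n ∈ S
    · obtain ⟨h, h1, h2⟩ := exists_log_ball ((hg n).mono hBD)
        (fun z hz => hgne n hn z (ball_subset_closedBall hz))
      exact ⟨h, fun _ => ⟨h1, h2⟩⟩
    · exact ⟨0, fun h => absurd h hn⟩
  choose hl hlspec using hlogex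
  set F : ℕ → ℂ → ℂ := fun n z => if n ∈ S then Complex.exp ((a n : ℂ) * hl n z) else 1
    with hF
  have hFd : ∀ n, DifferentiableOn ℂ (F n) B := by
    intro n
    by_cases hn : n ∈ S
    · simp only [hF, if_pos hn]
      exact (((hlspec n hn).1.const_mul _)).cexp
    · simp only [hF, if_neg hn]
      exact differentiableOn_const 1
  have hFne : ∀ n, ∀ z, F n z ≠ 0 := by
    intro n z
    by_cases hn : n ∈ S
    · simp only [hF, if_pos hn]; exact Complex.exp_ne_zero _
    · simp only [hF, if_neg hn]; exact one_ne_zero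
  have hFexp : ∀ n ∈ S, ∀ z ∈ B, ‖F n z‖ = Real.exp (a n * Real.log ‖g n z‖) := by
    intro n hn z hz
    have hgz : g n z ≠ 0 := hgne n hn z (ball_subset_closedBall hz)
    have hre : (hl n z).re = Real.log ‖g n z‖ := by
      have := congrArg norm ((hlspec n hn).2 z hz)
      rw [Complex.norm_exp] at this
      rw [← this, Real.log_exp]
    simp only [hF, if_pos hn]
    rw [Complex.norm_exp]
    congr 1
    rw [← hre]
    simp [Complex.mul_re]
  have hFrpow : ∀ n ∈ S, ∀ z ∈ B, ‖F n z‖ = ‖g n z‖ ^ a n := by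
    intro n hn z hz
    rw [hFexp n hn z hz, Real.rpow_def_of_pos (norm_pos_iff.2
      (hgne n hn z (ball_subset_closedBall hz))), mul_comm]
  have hFbound : ∀ n, ∀ z ∈ B, ‖F n z‖ ≤ M' := by
    intro n z hz
    by_cases hn : n ∈ S
    · rw [hFrpow n hn z hz]
      exact le_trans (hM n z (ball_subset_closedBall hz)) (le_max_left _ _)
    · simp only [hF, if_neg hn]; simpa using hM1
  -- pointwise ultrafilter limits
  have hptw : ∀ z, ∃ w : ℂ, z ∈ B → Tendsto (fun n => F n z) (U : Filter ℕ) (𝓝 w) := by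
    intro z
    by_cases hz : z ∈ B
    · have hmem : ∀ n, F n z ∈ closedBall (0:ℂ) M' := fun n => by
        simpa [Metric.mem_closedBall, dist_eq_norm] using hFbound n z hz
      have hle : (U.map (fun n => F n z) : Filter ℂ) ≤ 𝓟 (closedBall 0 M') := by
        rw [Filter.le_principal_iff]
        exact Filter.mem_map.2 (Filter.univ_mem' hmem)
      obtain ⟨w, _, hw⟩ := (isCompact_closedBall (0:ℂ) M').ultrafilter_le_nhds
        (U.map (fun n => F n z)) hle
      exact ⟨w, fun _ => hw⟩
    · exact ⟨0, fun h => absurd h hz⟩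
  choose Fl hFl using hptw
  -- equicontinuity
  set r' : ℝ := r/2 with hr'
  have hr'pos : 0 < r' := by positivity
  have hr'r : r' < r := by rw [hr']; linarith
  have hLip : (0:ℝ) < (2*M'+1)/(r - r') := by
    apply div_pos (by linarith) (by linarith)
  have hball'B : ball z₀ r' ⊆ B := ball_subset_ball hr'r.le
  have hcball'B : closedBall z₀ r' ⊆ B := closedBall_subset_ball hr'r
  have hEC : ∀ n, ∀ w ∈ closedBall z₀ r', ∀ z ∈ ball w (r - r'),
      dist (F n z) (F n w) ≤ (2*M'+1)/(r - r') * dist z w := by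
    intro n w hw z hz
    have hsub : ball w (r - r') ⊆ B := by
      intro ζ hζ
      rw [mem_ball] at hζ ⊢
      have h1 : dist ζ z₀ ≤ dist ζ w + dist w z₀ := dist_triangle _ _ _
      have h2 : dist w z₀ ≤ r' := by rwa [mem_closedBall] at hw
      linarith
    have hmaps : Set.MapsTo (F n) (ball w (r - r')) (ball (F n w) (2*M'+1)) := by
      intro ζ hζ
      rw [mem_ball]
      calc dist (F n ζ) (F n w) ≤ ‖F n ζ‖ + ‖F n w‖ := by
            simpa [dist_eq_norm] using norm_sub_le (F n ζ) (F n w)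
        _ ≤ M' + M' := add_le_add (hFbound n ζ (hsub hζ)) (hFbound n w (hcball'B hw))
        _ < 2*M' + 1 := by linarith
    exact Complex.dist_le_div_mul_dist_of_mapsTo_ball ((hFd n).mono hsub) (hmaps.mono_right ball_subset_closedBall) hz
  -- uniform convergence along the ultrafilter on compacts
  have hUC : ∀ K ⊆ ball z₀ r', IsCompact K → TendstoUniformlyOn F Fl (U : Filter ℕ) K := by
    intro K hK hKc
    rw [Metric.tendstoUniformlyOn_iff]
    intro ε' hε'
    set Lip : ℝ := (2*M'+1)/(r - r') with hLipdef
    set d : ℝ := min ((r - r')/2) (ε'/4 / Lip) with hd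
    have hdpos : 0 < d := lt_min (by linarith) (by positivity)
    have hdLip : Lip * d ≤ ε'/4 := by
      have h1 : d ≤ ε'/4 / Lip := min_le_right _ _
      calc Lip * d ≤ Lip * (ε'/4 / Lip) := by nlinarith
        _ = ε'/4 := by rw [mul_comm]; exact div_mul_cancel₀ _ (ne_of_gt hLip)
    have hdr : d < r - r' := by
      calc d ≤ (r - r')/2 := min_le_left _ _
        _ < r - r' := by linarith
    obtain ⟨t, htK, hcov⟩ := hKc.elim_nhds_subcover (fun w => ball w d)
      (fun w _ => ball_mem_nhds w hdpos)
    have hKB : K ⊆ B := hK.trans hball'B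
    have hKcb : K ⊆ closedBall z₀ r' := hK.trans ball_subset_closedBall
    have hEv : ∀ᶠ n in (U : Filter ℕ), ∀ w ∈ t, dist (Fl w) (F n w) < ε'/4 := by
      rw [Filter.eventually_all_finset]
      intro w hw
      have hwB : w ∈ B := hKB (htK w hw)
      have := (hFl w hwB)
      have h2 : ∀ᶠ n in (U : Filter ℕ), dist (F n w) (Fl w) < ε'/4 :=
        (Metric.tendsto_nhds.1 this) _ (by linarith)
      filter_upwards [h2] with n hn
      rwa [dist_comm]
    filter_upwards [hEv] with n hn z hzK
    obtain ⟨w, hwt, hzw⟩ : ∃ w ∈ t, z ∈ ball w d := by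
      have := hcov hzK
      simpa using this
    have hwK : w ∈ K := htK w hwt
    have hzball : z ∈ ball w (r - r') := ball_subset_ball hdr.le hzw
    have h3 : dist (F n z) (F n w) ≤ Lip * dist z w := hEC n w (hKcb hwK) z hzball
    have h4 : dist z w < d := by rwa [mem_ball] at hzw
    have h5 : dist (Fl z) (Fl w) ≤ ε'/4 := by
      have htd : Tendsto (fun n => dist (F n z) (F n w)) (U : Filter ℕ)
          (𝓝 (dist (Fl z) (Fl w))) := (hFl z (hKB hzK)).dist (hFl w (hKB hwK))
      apply le_of_tendsto htd
      filter_upwards with n'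
      calc dist (F n' z) (F n' w) ≤ Lip * dist z w := hEC n' w (hKcb hwK) z hzball
        _ ≤ Lip * d := by nlinarith
        _ ≤ ε'/4 := hdLip
    calc dist (Fl z) (F n z) ≤ dist (Fl z) (Fl w) + dist (Fl w) (F n w) + dist (F n w) (F n z) :=
          dist_triangle4 _ _ _ _
      _ ≤ ε'/4 + ε'/4 + (Lip * dist z w) := by
          refine add_le_add (add_le_add h5 (hn w hwt).le) ?_
          rwa [dist_comm (F n w)]
      _ ≤ ε'/4 + ε'/4 + ε'/4 := by
          refine add_le_add_right ?_ _
          calc Lip * dist z w ≤ Lip * d := by nlinarith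
            _ ≤ ε'/4 := hdLip
      _ < ε' := by linarith
  have hTLU : TendstoLocallyUniformlyOn F Fl (U : Filter ℕ) (ball z₀ r') :=
    (tendstoLocallyUniformlyOn_iff_forall_isCompact isOpen_ball).2 hUC
  have hFld : DifferentiableOn ℂ Fl (ball z₀ r') :=
    hTLU.differentiableOn (Filter.Eventually.of_forall fun n => (hFd n).mono hball'B)
      isOpen_ball
  have hz₀r' : z₀ ∈ ball z₀ r' := mem_ball_self hr'pos
  -- the sandwich helper
  have hsand : ∀ z ∈ B, ∀ x : EReal,
      Tendsto (fun n => ((Real.log ‖F n z‖ : ℝ) : EReal)) (U : Filter ℕ) (𝓝 x) →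
      liminf (fun n => (a n : EReal) * logAbsE (g n z)) atTop ≤ x ∧
        x ≤ limsup (fun n => (a n : EReal) * logAbsE (g n z)) atTop := by
    intro z hz x hx
    have hcongr : (fun n => (a n : EReal) * logAbsE (g n z)) =ᶠ[(U : Filter ℕ)]
        fun n => ((Real.log ‖F n z‖ : ℝ) : EReal) := by
      filter_upwards [hUS] with n hn
      have hgz : g n z ≠ 0 := hgne n hn z (ball_subset_closedBall hz)
      rw [logAbsE, if_neg hgz]
      rw [hFexp n hn z hz, Real.log_exp]
      exact_mod_cast (EReal.coe_mul (a n) (Real.log ‖g n z‖)).symm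
    have hx' : Tendsto (fun n => (a n : EReal) * logAbsE (g n z)) (U : Filter ℕ) (𝓝 x) :=
      hx.congr' hcongr.symm
    constructor
    · calc liminf (fun n => (a n : EReal) * logAbsE (g n z)) atTop
          ≤ liminf (fun n => (a n : EReal) * logAbsE (g n z)) (U : Filter ℕ) :=
            liminf_le_liminf_of_le hUle
        _ = x := hx'.liminf_eq
    · calc x = limsup (fun n => (a n : EReal) * logAbsE (g n z)) (U : Filter ℕ) :=
            hx'.limsup_eq.symm
        _ ≤ limsup (fun n => (a n : EReal) * logAbsE (g n z)) atTop :=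
            limsup_le_limsup_of_le hUle
  by_cases hFl0 : Fl z₀ = 0
  · -- limit vanishes at z₀
    have hFlan : AnalyticAt ℂ Fl z₀ := hFld.analyticAt (isOpen_ball.mem_nhds hz₀r')
    rcases hFlan.eventually_eq_zero_or_eventually_ne_zero with hzero | hnz
    · -- identically zero near z₀ : take v ≡ ⊥
      obtain ⟨ρ₁, hρ₁pos, hρ₁⟩ := Metric.eventually_nhds_iff.1 hzero
      set ρ : ℝ := min (ρ₁/2) r' with hρ
      have hρpos : 0 < ρ := lt_min (by linarith) hr'pos
      have hρr' : ρ ≤ r' := min_le_right _ _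
      have hzeroball : ∀ z ∈ ball z₀ ρ, Fl z = 0 := by
        intro z hz
        apply hρ₁
        rw [mem_ball] at hz
        calc dist z z₀ < ρ := hz
          _ ≤ ρ₁/2 := min_le_left _ _
          _ < ρ₁ := by linarith
      apply hno
      refine ⟨ball z₀ ρ, fun _ => ⊥, isOpen_ball, mem_ball_self hρpos,
        (ball_subset_ball hρr').trans (hball'B.trans hBD), Or.inr (fun z _ => rfl), ?_⟩
      intro z hz
      have hzB : z ∈ B := hball'B (ball_subset_ball hρr' hz)
      refine ⟨?_, bot_le⟩
      have htb : Tendsto (fun n => ((Real.log ‖F n z‖ : ℝ) : EReal)) (U : Filter ℕ) (𝓝 ⊥) := by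
        have hnorm : Tendsto (fun n => ‖F n z‖) (U : Filter ℕ) (𝓝[>] 0) := by
          apply tendsto_nhdsWithin_of_tendsto_nhds_of_eventually_within
          · have := (hFl z hzB).norm
            rwa [hzeroball z hz, norm_zero] at this
          · filter_upwards with n
            exact norm_pos_iff.2 (hFne n z)
        have hlogb : Tendsto (fun n => Real.log ‖F n z‖) (U : Filter ℕ) atBot :=
          Real.tendsto_log_nhdsGT_zero.comp hnorm
        rw [EReal.tendsto_nhds_bot_iff_real]
        intro x
        filter_upwards [hlogb.eventually_lt_atBot x] with n hn
        exact_mod_cast hn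
      exact (hsand z hzB ⊥ htb).1
    · -- isolated zero: contradiction via maximum principle
      exfalso
      obtain ⟨ρ₁, hρ₁pos, hρ₁⟩ := Metric.mem_nhdsWithin_iff.1 hnz
      set ρ : ℝ := min (ρ₁/2) (r'/2) with hρ
      have hρpos : 0 < ρ := lt_min (by linarith) (by linarith)
      have hρr' : ρ < r' := by
        calc ρ ≤ r'/2 := min_le_right _ _
          _ < r' := by linarith
      have hsphere_sub : sphere z₀ ρ ⊆ ball z₀ r' := fun z hz => by
        rw [mem_sphere] at hz; rw [mem_ball, hz]; exact hρr'
      have hsphere_ne : ∀ z ∈ sphere z₀ ρ, Fl z ≠ 0 := by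
        intro z hz
        rw [mem_sphere] at hz
        refine hρ₁ ⟨?_, ?_⟩
        · rw [mem_ball, hz]
          calc ρ ≤ ρ₁/2 := min_le_left _ _
            _ < ρ₁ := by linarith
        · simp only [Set.mem_compl_iff, Set.mem_singleton_iff]
          intro h0
          rw [h0, dist_self] at hz
          exact hρpos.ne' hz.symm
      obtain ⟨zm, hzm, hzmin⟩ := (isCompact_sphere z₀ ρ).exists_isMinOn
        ((NormedSpace.sphere_nonempty.2 hρpos.le))
        ((hFld.continuousOn.mono hsphere_sub).norm)
      set m : ℝ := ‖Fl zm‖ with hm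
      have hmpos : 0 < m := norm_pos_iff.2 (hsphere_ne zm hzm)
      have huc := hUC (sphere z₀ ρ) hsphere_sub (isCompact_sphere z₀ ρ)
      have hev1 := (Metric.tendstoUniformlyOn_iff.1 huc) (m/2) (by linarith)
      have hev2 : ∀ᶠ n in (U : Filter ℕ), ‖F n z₀‖ < m/2 := by
        have := (hFl z₀ (hball'B hz₀r')).norm
        rw [hFl0, norm_zero] at this
        exact this.eventually_lt_const (by linarith)
      obtain ⟨n, hn1, hn2⟩ := (hev1.and hev2).exists
      have hsb : ∀ z ∈ sphere z₀ ρ, m/2 ≤ ‖F n z‖ := by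
        intro z hz
        have h1 : m ≤ ‖Fl z‖ := hzmin hz
        have h2 : dist (Fl z) (F n z) < m/2 := hn1 z hz
        have h3 : ‖Fl z‖ - ‖F n z‖ ≤ dist (Fl z) (F n z) := by
          rw [dist_eq_norm]
          exact (norm_sub_norm_le _ _).trans (le_refl _)
        linarith
      have hcbB : closedBall z₀ ρ ⊆ B := (closedBall_subset_ball (lt_trans hρr' hr'r))
      have hinv : DiffContOnCl ℂ (fun z => (F n z)⁻¹) (ball z₀ ρ) := by
        constructor
        · exact (((hFd n).mono ((ball_subset_ball hρr'.le).trans hball'B))).inv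
            (fun z _ => hFne n z)
        · rw [closure_ball z₀ hρpos.ne']
          exact (((hFd n).continuousOn.mono hcbB)).inv₀ (fun z _ => hFne n z)
      have hfr : ∀ z ∈ frontier (ball z₀ ρ), ‖(F n z)⁻¹‖ ≤ (m/2)⁻¹ := by
        intro z hz
        rw [frontier_ball z₀ hρpos.ne'] at hz
        rw [norm_inv]
        exact inv_anti₀ (by linarith) (hsb z hz)
      have hmax := Complex.norm_le_of_forall_mem_frontier_norm_le isBounded_ball hinv hfr
        (show z₀ ∈ closure (ball z₀ ρ) by
          rw [closure_ball z₀ hρpos.ne']; exact mem_closedBall_self hρpos.le)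
      rw [norm_inv] at hmax
      have : m/2 ≤ ‖F n z₀‖ := by
        have hFn0 : 0 < ‖F n z₀‖ := norm_pos_iff.2 (hFne n z₀)
        rw [inv_le_inv₀ hFn0 (by linarith)] at hmax
        exact hmax
      linarith
  · -- limit nonvanishing at z₀ : harmonic v = log ‖Fl‖
    have hcontFl : ContinuousAt Fl z₀ :=
      (hFld.continuousOn.continuousAt (isOpen_ball.mem_nhds hz₀r'))
    obtain ⟨ρ₁, hρ₁pos, hρ₁⟩ := Metric.eventually_nhds_iff.1 (hcontFl.eventually_ne hFl0)
    set ρ : ℝ := min (ρ₁/2) (r'/2) with hρ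
    have hρpos : 0 < ρ := lt_min (by linarith) (by linarith)
    have hρr' : ρ < r' := by
      calc ρ ≤ r'/2 := min_le_right _ _
        _ < r' := by linarith
    have hsub' : ball z₀ ρ ⊆ ball z₀ r' := ball_subset_ball hρr'.le
    have hneFl : ∀ z ∈ ball z₀ ρ, Fl z ≠ 0 := by
      intro z hz
      apply hρ₁
      rw [mem_ball] at hz
      calc dist z z₀ < ρ := hz
        _ ≤ ρ₁/2 := min_le_left _ _
        _ < ρ₁ := by linarith
    apply hno
    have hharm := harmonic_log_norm isOpen_ball (hFld.mono hsub') hneFl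
    refine ⟨ball z₀ ρ, fun z => ((Real.log ‖Fl z‖ : ℝ) : EReal), isOpen_ball,
      mem_ball_self hρpos, hsub'.trans (hball'B.trans hBD),
      Or.inl ⟨fun z => Real.log ‖Fl z‖, hharm, fun z _ => rfl⟩, ?_⟩
    intro z hz
    have hzB : z ∈ B := hball'B (hsub' hz)
    have htb : Tendsto (fun n => ((Real.log ‖F n z‖ : ℝ) : EReal)) (U : Filter ℕ)
        (𝓝 ((Real.log ‖Fl z‖ : ℝ) : EReal)) := by
      rw [EReal.tendsto_coe]
      exact (Real.continuousAt_log (norm_ne_zero_iff.2 (hneFl z hz))).tendsto.comp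
        ((hFl z hzB).norm)
    exact hsand z hzB _ htb
end

section
/- For every complex number z with |z| > 1, (1/n)·ln|F_n(z)| → ln|z| as n → ∞. -/
open Complex Filter

/-- `partsCount k n` is the number of partitions of `n` with exactly `k` parts. -/
noncomputable def partsCount (k n : ℕ) : ℕ := Nat.card {p : Nat.Partition n // p.parts.card = k}

/-- The partition polynomial `F_n(x) = ∑_{k=1}^n p_k(n) x^k`. -/
noncomputable def F (n : ℕ) (x : ℂ) : ℂ := ∑ k ∈ Finset.Icc 1 n, (partsCount k n : ℂ) * x ^ k

namespace PartitionAux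

open Multiset

/-- total number of partitions of `j` -/
def P (j : ℕ) : ℕ := Fintype.card (Nat.Partition j)

/-- number of partitions of `j` all of whose parts exceed `N` -/
def cA (N j : ℕ) : ℕ := Fintype.card {π : Nat.Partition j // ∀ i ∈ π.parts, N < i}

lemma sum_map_pred (s : Multiset ℕ) (hs : ∀ x ∈ s, 0 < x) :
    (s.map (· - 1)).sum + Multiset.card s = s.sum := by
  induction s using Multiset.induction with
  | empty => simp
  | cons a s ih =>
    have ha := hs a (Multiset.mem_cons_self a s)
    have ih' := ih (fun x hx => hs x (Multiset.mem_cons_of_mem hx))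
    simp only [Multiset.map_cons, Multiset.sum_cons, Multiset.card_cons]
    omega

def partsEquiv (m j : ℕ) :
    {π : Nat.Partition (m + j) // Multiset.card π.parts = m} ≃
      {μ : Nat.Partition j // Multiset.card μ.parts ≤ m} where
  toFun := fun π => ⟨Nat.Partition.ofSums j (π.1.parts.map (· - 1)) (by
      have := sum_map_pred π.1.parts (fun x hx => π.1.parts_pos hx)
      rw [π.1.parts_sum, π.2] at this
      omega), by
    simp only [Nat.Partition.ofSums]
    calc Multiset.card ((π.1.parts.map (· - 1)).filter (· ≠ 0))
        ≤ Multiset.card (π.1.parts.map (· - 1)) := Multiset.card_le_card (Multiset.filter_le _ _)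
      _ = m := by rw [Multiset.card_map, π.2]⟩
  invFun := fun μ => ⟨⟨μ.1.parts.map (· + 1) + Multiset.replicate (m - Multiset.card μ.1.parts) 1,
      by
        intro i hi
        rcases Multiset.mem_add.1 hi with h | h
        · rcases Multiset.mem_map.1 h with ⟨x, _, rfl⟩; omega
        · rw [Multiset.eq_of_mem_replicate h]; omega,
      by
        rw [Multiset.sum_add, Multiset.sum_replicate, smul_eq_mul, mul_one]
        have h1 : (μ.1.parts.map (· + 1)).sum = μ.1.parts.sum + Multiset.card μ.1.parts := by
          have := sum_map_pred (μ.1.parts.map (· + 1)) (by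
            intro x hx; rcases Multiset.mem_map.1 hx with ⟨y, _, rfl⟩; omega)
          rw [Multiset.map_map] at this
          have h2 : (μ.1.parts.map ((· - 1) ∘ (· + 1))) = μ.1.parts.map id := by
            apply Multiset.map_congr rfl; intro x _; simp
          rw [h2, Multiset.map_id, Multiset.card_map] at this
          omega
        rw [h1, μ.1.parts_sum]
        have := μ.2
        omega⟩, by
      simp only [Multiset.card_add, Multiset.card_map, Multiset.card_replicate]
      have := μ.2
      omega⟩
  left_inv := by
    rintro ⟨π, hπ⟩
    apply Subtype.ext
    apply Nat.Partition.ext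
    simp only [Nat.Partition.ofSums]
    have hfm : (π.parts.map (· - 1)).filter (· ≠ 0) = (π.parts.filter (· ≠ 1)).map (· - 1) := by
      rw [Multiset.filter_map]
      apply congrArg
      apply Multiset.filter_congr
      intro x hx
      have := π.parts_pos hx
      simp only [Function.comp]
      omega
    rw [hfm]
    have hmap : ((π.parts.filter (· ≠ 1)).map (· - 1)).map (· + 1) = π.parts.filter (· ≠ 1) := by
      rw [Multiset.map_map]
      rw [show ((· + 1) ∘ (· - 1) : ℕ → ℕ) = fun x => x - 1 + 1 from rfl]
      have : ∀ x ∈ π.parts.filter (· ≠ 1), x - 1 + 1 = id x := by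
        intro x hx
        have hx1 := Multiset.of_mem_filter hx
        have := π.parts_pos (Multiset.mem_of_mem_filter hx)
        simp; omega
      rw [Multiset.map_congr rfl this, Multiset.map_id]
    rw [hmap]
    have hcard : Multiset.card ((π.parts.filter (· ≠ 1)).map (· - 1)) = m - π.parts.count 1 := by
      rw [Multiset.card_map]
      have h2 : π.parts.filter (fun x => ¬ x ≠ 1) = π.parts.filter (· = 1) :=
        Multiset.filter_congr (by intro x _; simp)
      have h3 := Multiset.filter_add_not (· ≠ 1) π.parts
      have h4 : Multiset.card (π.parts.filter (· ≠ 1)) + Multiset.card (π.parts.filter (fun x => ¬ x ≠ 1)) = m := by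
        rw [← Multiset.card_add, h3, hπ]
      rw [h2] at h4
      rw [Multiset.filter_eq', Multiset.card_replicate] at h4
      omega
    rw [hcard]
    have hrep : Multiset.replicate (π.parts.count 1) 1 = π.parts.filter (· = 1) := by
      rw [Multiset.filter_eq']
    have hc : π.parts.count 1 ≤ m := by
      exact le_trans (Multiset.count_le_card _ _) (le_of_eq hπ)
    have hmm : m - (m - π.parts.count 1) = π.parts.count 1 := by omega
    rw [hmm, hrep]
    have h2 : π.parts.filter (fun x => ¬ x ≠ 1) = π.parts.filter (· = 1) :=
      Multiset.filter_congr (by intro x _; simp)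
    have h3 := Multiset.filter_add_not (· ≠ 1) π.parts
    rw [h2] at h3
    exact h3
  right_inv := by
    rintro ⟨μ, hμ⟩
    apply Subtype.ext
    apply Nat.Partition.ext
    simp only [Nat.Partition.ofSums]
    rw [Multiset.map_add, Multiset.map_map, Multiset.filter_add]
    have h1 : (μ.parts.map ((· - 1) ∘ (· + 1))) = μ.parts := by
      rw [show ((· - 1) ∘ (· + 1) : ℕ → ℕ) = fun x => x + 1 - 1 from rfl]
      simp
    rw [h1]
    have h2 : ((Multiset.replicate (m - Multiset.card μ.parts) 1).map (· - 1)) =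
        Multiset.replicate (m - Multiset.card μ.parts) 0 := by simp
    rw [h2]
    have h3 : (Multiset.replicate (m - Multiset.card μ.parts) 0).filter (· ≠ 0) = 0 := by
      rw [Multiset.filter_eq_nil]
      intro a ha
      rw [Multiset.eq_of_mem_replicate ha]
      simp
    rw [h3, add_zero]
    rw [Multiset.filter_eq_self]
    intro x hx
    have := μ.parts_pos hx
    omega

lemma card_parts_le {j : ℕ} (π : Nat.Partition j) : Multiset.card π.parts ≤ j := by
  have := Multiset.card_nsmul_le_sum (s := π.parts) (a := 1) (fun x hx => π.parts_pos hx)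
  simpa [π.parts_sum] using this

lemma partsCount_cast (m j : ℕ) :
    partsCount m (m + j) = Nat.card {μ : Nat.Partition j // Multiset.card μ.parts ≤ m} := by
  rw [partsCount]
  exact Nat.card_congr (partsEquiv m j)

lemma partsCount_le_P (j n : ℕ) (h : j ≤ n) : partsCount (n - j) n ≤ P j := by
  obtain ⟨m, rfl⟩ : ∃ m, n = m + j := ⟨n - j, by omega⟩
  have hmj : m + j - j = m := by omega
  rw [hmj, partsCount_cast, Nat.card_eq_fintype_card, P]
  exact Fintype.card_subtype_le _

lemma partsCount_eq_P (j n : ℕ) (h : 2 * j ≤ n) : partsCount (n - j) n = P j := by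
  obtain ⟨m, rfl⟩ : ∃ m, n = m + j := ⟨n - j, by omega⟩
  have hmj : m + j - j = m := by omega
  rw [hmj, partsCount_cast, P, Nat.card_eq_fintype_card]
  apply Fintype.card_congr
  apply Equiv.subtypeUnivEquiv
  intro μ
  exact le_trans (card_parts_le μ) (by omega)

lemma partsCount_zero (n : ℕ) (hn : 1 ≤ n) : partsCount 0 n = 0 := by
  rw [partsCount, Nat.card_eq_fintype_card, Fintype.card_eq_zero_iff]
  constructor
  rintro ⟨π, hπ⟩
  have : π.parts = 0 := Multiset.card_eq_zero.1 hπ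
  have hs := π.parts_sum
  rw [this] at hs
  simp at hs
  omega

lemma cA_zero (j : ℕ) : cA 0 j = P j :=
  Fintype.card_congr (Equiv.subtypeUnivEquiv (fun π i hi => π.parts_pos hi))

lemma cA_zero_right (N : ℕ) : cA N 0 = 1 := by
  rw [cA, Fintype.card_eq_one_iff]
  refine ⟨⟨default, by simp⟩, ?_⟩
  rintro ⟨y, hy⟩
  apply Subtype.ext
  apply Subsingleton.elim

lemma cA_eq_zero {N j : ℕ} (h1 : 1 ≤ j) (h2 : j ≤ N) : cA N j = 0 := by
  rw [cA, Fintype.card_eq_zero_iff]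
  constructor
  rintro ⟨π, hπ⟩
  have hne : π.parts ≠ 0 := by
    intro h
    have := π.parts_sum
    rw [h] at this
    simp at this
    omega
  rcases Multiset.exists_mem_of_ne_zero hne with ⟨i, hi⟩
  have h3 := hπ i hi
  have h4 : i ≤ j := le_of_le_of_eq (Multiset.le_sum_of_mem hi) π.parts_sum
  omega

lemma cA_le_P (N j : ℕ) : cA N j ≤ P j := Fintype.card_subtype_le _

def eraseEquiv {N j : ℕ} (h : N + 1 ≤ j) :
    {π : Nat.Partition j // (∀ i ∈ π.parts, N < i) ∧ (N+1) ∈ π.parts} ≃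
    {π : Nat.Partition (j - (N+1)) // ∀ i ∈ π.parts, N < i} where
  toFun := fun π => ⟨⟨π.1.parts.erase (N+1),
      fun hi => π.1.parts_pos (Multiset.mem_of_mem_erase hi),
      by
        have hc := Multiset.cons_erase π.2.2
        have := congrArg Multiset.sum hc
        rw [Multiset.sum_cons, π.1.parts_sum] at this
        omega⟩,
    fun i hi => π.2.1 i (Multiset.mem_of_mem_erase hi)⟩
  invFun := fun π => ⟨⟨(N+1) ::ₘ π.1.parts,
      by
        intro i hi
        rcases Multiset.mem_cons.1 hi with rfl | hi
        · omega
        · exact π.1.parts_pos hi,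
      by rw [Multiset.sum_cons, π.1.parts_sum]; omega⟩,
    ⟨by
      intro i hi
      rcases Multiset.mem_cons.1 hi with rfl | hi
      · omega
      · exact π.2 i hi,
    Multiset.mem_cons_self _ _⟩⟩
  left_inv := by
    rintro ⟨π, hπ⟩
    apply Subtype.ext
    apply Nat.Partition.ext
    exact Multiset.cons_erase hπ.2
  right_inv := by
    rintro ⟨π, hπ⟩
    apply Subtype.ext
    apply Nat.Partition.ext
    exact Multiset.erase_cons_head _ _

lemma cA_rec {N j : ℕ} (h : N + 1 ≤ j) : cA N j = cA (N + 1) j + cA N (j - (N + 1)) := by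
  classical
  have hsplit : cA N j =
      Fintype.card {π : Nat.Partition j // (∀ i ∈ π.parts, N < i) ∧ (N+1) ∉ π.parts}
      + Fintype.card {π : Nat.Partition j // (∀ i ∈ π.parts, N < i) ∧ (N+1) ∈ π.parts} := by
    rw [cA]
    rw [Fintype.card_subtype, Fintype.card_subtype, Fintype.card_subtype]
    rw [← Finset.card_filter_add_card_filter_not (s := Finset.univ.filter
      (fun π : Nat.Partition j => ∀ i ∈ π.parts, N < i)) (p := fun π => (N+1) ∉ π.parts)]
    · congr 1
      · rw [Finset.filter_filter]
      · rw [Finset.filter_filter]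
        congr 1
        ext π
        simp
  have h1 : Fintype.card {π : Nat.Partition j // (∀ i ∈ π.parts, N < i) ∧ (N+1) ∉ π.parts}
      = cA (N+1) j := by
    apply Fintype.card_congr
    apply Equiv.subtypeEquivRight
    intro π
    constructor
    · rintro ⟨hall, hnot⟩ i hi
      have := hall i hi
      have : i ≠ N + 1 := fun hh => hnot (hh ▸ hi)
      omega
    · intro hall
      refine ⟨fun i hi => by have := hall i hi; omega, fun hmem => by have := hall _ hmem; omega⟩
  have h2 : Fintype.card {π : Nat.Partition j // (∀ i ∈ π.parts, N < i) ∧ (N+1) ∈ π.parts}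
      = cA N (j - (N+1)) := Fintype.card_congr (eraseEquiv h)
  omega

lemma list_eq_of_getD {s : ℕ} {l₁ l₂ : List ℕ} (h₁ : ∀ x ∈ l₁, 0 < x) (h₂ : ∀ x ∈ l₂, 0 < x)
    (hl₁ : l₁.length ≤ s) (hl₂ : l₂.length ≤ s) (h : ∀ i, i < s → l₁.getD i 0 = l₂.getD i 0) :
    l₁ = l₂ := by
  have key : ∀ (l : List ℕ), (∀ x ∈ l, 0 < x) → ∀ i, i < l.length ↔ l.getD i 0 ≠ 0 := by
    intro l hl i
    constructor
    · intro hi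
      rw [List.getD_eq_getElem _ _ hi]
      exact (hl _ (List.getElem_mem hi)).ne'
    · intro hne
      by_contra hge
      push_neg at hge
      rw [List.getD_eq_default _ _ hge] at hne
      exact hne rfl
  have hlen : l₁.length = l₂.length := by
    by_contra hne
    rcases Nat.lt_or_ge l₁.length l₂.length with hlt | hge
    · have := (key l₂ h₂ l₁.length).1 hlt
      rw [← h _ (lt_of_lt_of_le hlt hl₂)] at this
      exact this (List.getD_eq_default _ _ le_rfl)
    · have hlt : l₂.length < l₁.length := by omega
      have := (key l₁ h₁ l₂.length).1 hlt
      rw [h _ (lt_of_lt_of_le hlt hl₁)] at this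
      exact this (List.getD_eq_default _ _ le_rfl)
  apply List.ext_getElem hlen
  intro n hn1 hn2
  rw [← List.getD_eq_getElem l₁ 0 hn1, ← List.getD_eq_getElem l₂ 0 hn2]
  exact h n (lt_of_lt_of_le hn1 hl₁)

lemma P_le (j : ℕ) : P j ≤ (j + 1) ^ (2 * (Nat.sqrt j + 1)) := by
  classical
  set s := Nat.sqrt j + 1 with hs
  set lst : Nat.Partition j → List ℕ :=
    fun π => Multiset.sort (π.parts.filter (fun x => s < x)) (· ≤ ·) with hlst
  have lst_mem : ∀ π (x : ℕ), x ∈ lst π → x ∈ π.parts := by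
    intro π x hx
    rw [hlst, Multiset.mem_sort] at hx
    exact Multiset.mem_of_mem_filter hx
  have lst_pos : ∀ π (x : ℕ), x ∈ lst π → 0 < x := fun π x hx => π.parts_pos (lst_mem π x hx)
  have lst_le : ∀ π (x : ℕ), x ∈ lst π → x ≤ j := by
    intro π x hx
    exact le_of_le_of_eq (Multiset.le_sum_of_mem (lst_mem π x hx)) π.parts_sum
  have lst_len : ∀ π, (lst π).length ≤ s := by
    intro π
    have hlen : (lst π).length = Multiset.card (π.parts.filter (fun x => s < x)) := by
      rw [hlst]
      rw [← Multiset.coe_card, Multiset.sort_eq]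
    by_contra hgt
    push_neg at hgt
    have hbig : Multiset.card (π.parts.filter (fun x => s < x)) • (s + 1)
        ≤ (π.parts.filter (fun x => s < x)).sum := by
      apply Multiset.card_nsmul_le_sum
      intro x hx
      have := Multiset.of_mem_filter hx
      omega
    have hsum : (π.parts.filter (fun x => s < x)).sum ≤ j := by
      have hfa := Multiset.filter_add_not (fun x => s < x) π.parts
      have := congrArg Multiset.sum hfa
      rw [Multiset.sum_add, π.parts_sum] at this
      omega
    have hjs : j < s * s := Nat.lt_succ_sqrt j
    rw [smul_eq_mul] at hbig
    have hcard : s + 1 ≤ Multiset.card (π.parts.filter (fun x => s < x)) := by omega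
    have : (s + 1) * (s + 1) ≤ Multiset.card (π.parts.filter (fun x => s < x)) * (s + 1) :=
      Nat.mul_le_mul_right _ hcard
    nlinarith
  set E : Nat.Partition j → (Fin s → Fin (j+1)) × (Fin s → Fin (j+1)) :=
    fun π => (fun i => ⟨π.parts.count (i.1 + 1), by
        have h1 : π.parts.count (i.1+1) ≤ Multiset.card π.parts := Multiset.count_le_card _ _
        have h2 : Multiset.card π.parts ≤ j := by
          have := Multiset.card_nsmul_le_sum (s := π.parts) (a := 1) (fun x hx => π.parts_pos hx)
          simpa [π.parts_sum] using this
        omega⟩,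
      fun i => ⟨(lst π).getD i.1 0, by
        rcases Nat.lt_or_ge i.1 (lst π).length with hi | hi
        · rw [List.getD_eq_getElem _ _ hi]
          have := lst_le π _ (List.getElem_mem hi)
          omega
        · rw [List.getD_eq_default _ _ hi]
          omega⟩) with hE
  have hinj : Function.Injective E := by
    intro π₁ π₂ hEq
    have h1 := congrArg Prod.fst hEq
    have h2 := congrArg Prod.snd hEq
    have hlists : lst π₁ = lst π₂ := by
      apply list_eq_of_getD (lst_pos π₁) (lst_pos π₂) (lst_len π₁) (lst_len π₂)
      intro i hi
      have := congrFun h2 ⟨i, hi⟩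
      exact congrArg Fin.val this
    have hbig : π₁.parts.filter (fun x => s < x) = π₂.parts.filter (fun x => s < x) := by
      rw [hlst] at hlists
      have := congrArg (fun l : List ℕ => (l : Multiset ℕ)) hlists
      simpa [Multiset.sort_eq] using this
    have hcount : ∀ v : ℕ, ¬ s < v → π₁.parts.count v = π₂.parts.count v := by
      intro v hv
      rcases Nat.eq_zero_or_pos v with rfl | hvpos
      · rw [Multiset.count_eq_zero.2 (fun hmem => (π₁.parts_pos hmem).ne rfl),
            Multiset.count_eq_zero.2 (fun hmem => (π₂.parts_pos hmem).ne rfl)]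
      · have hiv : v - 1 < s := by omega
        have := congrFun h1 ⟨v - 1, hiv⟩
        have := congrArg Fin.val this
        simp only [hE] at this
        have hv1 : v - 1 + 1 = v := by omega
        rwa [hv1] at this
    have hsmall : π₁.parts.filter (fun x => ¬ s < x) = π₂.parts.filter (fun x => ¬ s < x) := by
      ext v
      rw [Multiset.count_filter, Multiset.count_filter]
      by_cases hv : s < v
      · simp [hv]
      · simp only [hv, if_true, if_neg]
        exact hcount v hv
    apply Nat.Partition.ext
    rw [← Multiset.filter_add_not (fun x => s < x) π₁.parts,
        ← Multiset.filter_add_not (fun x => s < x) π₂.parts, hbig, hsmall]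
  calc P j ≤ Fintype.card ((Fin s → Fin (j+1)) × (Fin s → Fin (j+1))) :=
        Fintype.card_le_of_injective E hinj
    _ = (j + 1) ^ (2 * s) := by
        rw [Fintype.card_prod, Fintype.card_fun, Fintype.card_fin, Fintype.card_fin, ← pow_add]
        ring_nf

lemma P_eventually_le {r : ℝ} (hr : 1 < r) : ∀ᶠ j in atTop, (P j : ℝ) ≤ r ^ j := by
  have hc : 0 < Real.log r := Real.log_pos hr
  have hev1 : ∀ᶠ j : ℕ in atTop, 32 / Real.log r ≤ ((j : ℝ) + 1) ^ ((1:ℝ)/4) := by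
    have h1 : Tendsto (fun x : ℝ => x ^ ((1:ℝ)/4)) atTop atTop :=
      tendsto_rpow_atTop (by norm_num)
    have h2 : Tendsto (fun j : ℕ => (j : ℝ) + 1) atTop atTop :=
      tendsto_atTop_add_const_right _ 1 tendsto_natCast_atTop_atTop
    exact (h1.comp h2).eventually_ge_atTop _
  filter_upwards [hev1, eventually_ge_atTop 1] with j hj hj1
  have hj1R : (1:ℝ) ≤ (j:ℝ) := by exact_mod_cast hj1
  have hx : (0:ℝ) < (j:ℝ) + 1 := by positivity
  have h0 : (P j : ℝ) ≤ ((j:ℝ) + 1) ^ (2 * (Nat.sqrt j + 1) : ℕ) := by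
    have := P_le j
    calc (P j : ℝ) ≤ (((j + 1) ^ (2 * (Nat.sqrt j + 1)) : ℕ) : ℝ) := by exact_mod_cast this
      _ = ((j:ℝ) + 1) ^ (2 * (Nat.sqrt j + 1) : ℕ) := by push_cast; ring
  have h1 : ((j:ℝ) + 1) ^ (2 * (Nat.sqrt j + 1) : ℕ)
      = ((j:ℝ) + 1) ^ ((2 * (Nat.sqrt j + 1) : ℕ) : ℝ) := by
    rw [Real.rpow_natCast]
  have hsqsq : ((Nat.sqrt j : ℝ))^2 ≤ (j:ℝ) + 1 := by
    have h' : ((Nat.sqrt j : ℝ))^2 ≤ (j : ℝ) := by exact_mod_cast Nat.sqrt_le' j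
    linarith
  have hsq : ((Nat.sqrt j : ℝ)) ≤ Real.sqrt ((j:ℝ) + 1) := by
    calc ((Nat.sqrt j : ℝ)) = Real.sqrt (((Nat.sqrt j : ℝ))^2) := by
          rw [Real.sqrt_sq (by positivity)]
      _ ≤ Real.sqrt ((j:ℝ) + 1) := Real.sqrt_le_sqrt hsqsq
  have hsq1 : (1:ℝ) ≤ Real.sqrt ((j:ℝ) + 1) := by
    have : Real.sqrt 1 ≤ Real.sqrt ((j:ℝ)+1) := Real.sqrt_le_sqrt (by linarith)
    simpa using this
  have hexp : ((2 * (Nat.sqrt j + 1) : ℕ) : ℝ) ≤ 4 * Real.sqrt ((j:ℝ) + 1) := by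
    push_cast
    nlinarith
  have hlog : Real.log ((j:ℝ)+1) ≤ ((j:ℝ)+1) ^ ((1:ℝ)/4) * 4 := by
    have := Real.log_le_rpow_div (x := (j:ℝ)+1) (le_of_lt hx) (by norm_num : (0:ℝ) < 1/4)
    calc Real.log ((j:ℝ)+1) ≤ ((j:ℝ)+1) ^ ((1:ℝ)/4) / (1/4) := this
      _ = ((j:ℝ)+1) ^ ((1:ℝ)/4) * 4 := by ring
  have hhalf : Real.sqrt ((j:ℝ)+1) = ((j:ℝ)+1) ^ ((1:ℝ)/2) := Real.sqrt_eq_rpow _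
  have e34 : ((j:ℝ)+1)^((1:ℝ)/2) * ((j:ℝ)+1)^((1:ℝ)/4) = ((j:ℝ)+1)^((3:ℝ)/4) := by
    rw [← Real.rpow_add hx]; norm_num
  have e1 : ((j:ℝ)+1) ^ ((3:ℝ)/4) * ((j:ℝ)+1) ^ ((1:ℝ)/4) = (j:ℝ)+1 := by
    rw [← Real.rpow_add hx]; norm_num
  have hmain : ((2 * (Nat.sqrt j + 1) : ℕ) : ℝ) * Real.log ((j:ℝ)+1) ≤ (j:ℝ) * Real.log r := by
    have step1 : ((2 * (Nat.sqrt j + 1) : ℕ) : ℝ) * Real.log ((j:ℝ)+1)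
        ≤ (4 * Real.sqrt ((j:ℝ)+1)) * (((j:ℝ)+1) ^ ((1:ℝ)/4) * 4) :=
      mul_le_mul hexp hlog (Real.log_nonneg (by linarith)) (by positivity)
    have key : (4 * Real.sqrt ((j:ℝ)+1)) * (((j:ℝ)+1) ^ ((1:ℝ)/4) * 4)
        = 16 * ((j:ℝ)+1) ^ ((3:ℝ)/4) := by
      calc (4 * Real.sqrt ((j:ℝ)+1)) * (((j:ℝ)+1) ^ ((1:ℝ)/4) * 4)
          = 16 * (((j:ℝ)+1)^((1:ℝ)/2) * ((j:ℝ)+1)^((1:ℝ)/4)) := by rw [hhalf]; ring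
        _ = 16 * ((j:ℝ)+1) ^ ((3:ℝ)/4) := by rw [e34]
    have h34 : (0:ℝ) ≤ ((j:ℝ)+1) ^ ((3:ℝ)/4) := by positivity
    have h32 : 32 ≤ ((j:ℝ)+1) ^ ((1:ℝ)/4) * Real.log r := by
      rw [div_le_iff₀ hc] at hj
      linarith
    have hmul := mul_le_mul_of_nonneg_left h32 h34
    rw [← mul_assoc, e1] at hmul
    -- hmul : (j+1)^(3/4) * 32 ≤ (j+1) * log r
    have h2j : ((j:ℝ)+1) * Real.log r ≤ 2 * ((j:ℝ) * Real.log r) := by nlinarith [hc.le]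
    linarith [key ▸ step1]
  calc (P j : ℝ) ≤ ((j:ℝ) + 1) ^ ((2 * (Nat.sqrt j + 1) : ℕ) : ℝ) := h1 ▸ h0
    _ = Real.exp (Real.log ((j:ℝ)+1) * ((2 * (Nat.sqrt j + 1) : ℕ) : ℝ)) := by
        rw [Real.rpow_def_of_pos hx]
    _ ≤ Real.exp ((j:ℝ) * Real.log r) := by
        apply Real.exp_le_exp.2
        rw [mul_comm]
        exact hmain
    _ = r ^ (j : ℕ) := by
        rw [show (j:ℝ) * Real.log r = Real.log r * (j:ℝ) by ring,
          ← Real.rpow_def_of_pos (by linarith : (0:ℝ) < r), Real.rpow_natCast]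

lemma summable_P {t : ℝ} (ht0 : 0 ≤ t) (ht : t < 1) :
    Summable (fun j : ℕ => (P j : ℝ) * t ^ j) := by
  rcases eq_or_lt_of_le ht0 with rfl | htpos
  · apply (summable_nat_add_iff 1).mp
    have : (fun j : ℕ => (P (j+1) : ℝ) * 0 ^ (j+1)) = fun _ => 0 := by
      funext j; simp
    rw [this]
    exact summable_zero
  · set r : ℝ := (1 + 1/t) / 2 with hr
    have hr1 : 1 < r := by
      have : 1 < 1/t := (one_lt_div htpos).2 ht
      rw [hr]; linarith
    have hrt : r * t < 1 := by
      have hrteq : r * t = (t + 1) / 2 := by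
        rw [hr]; field_simp
      rw [hrteq]; linarith
    have hrt0 : 0 ≤ r * t := by positivity
    obtain ⟨N, hN⟩ := (P_eventually_le hr1).exists_forall_of_atTop
    apply (summable_nat_add_iff N).mp
    apply Summable.of_nonneg_of_le (fun j => by positivity)
      (f := fun j => (r * t) ^ (j + N))
    · intro j
      have h1 : (P (j + N) : ℝ) ≤ r ^ (j + N) := hN (j + N) (by omega)
      rw [mul_pow]
      exact mul_le_mul_of_nonneg_right h1 (by positivity)
    · apply (summable_nat_add_iff N).mpr
      exact summable_geometric_of_lt_one hrt0 hrt

variable {w : ℂ} (hw : ‖w‖ < 1)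
include hw

lemma summable_cA (N : ℕ) : Summable (fun j : ℕ => (cA N j : ℂ) * w ^ j) := by
  apply Summable.of_norm
  apply Summable.of_nonneg_of_le (fun j => norm_nonneg _) (f := fun j => (P j : ℝ) * ‖w‖ ^ j)
  · intro j
    rw [norm_mul, norm_pow, Complex.norm_natCast]
    exact mul_le_mul_of_nonneg_right (by exact_mod_cast cA_le_P N j) (by positivity)
  · exact summable_P (norm_nonneg w) hw

lemma LL_succ (N : ℕ) :
    (∑' j : ℕ, (cA (N + 1) j : ℂ) * w ^ j)
      = (∑' j : ℕ, (cA N j : ℂ) * w ^ j) * (1 - w ^ (N + 1)) := by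
  classical
  set c : ℕ → ℂ := fun j => (cA N j : ℂ) * w ^ j with hc
  set g : ℕ → ℂ := fun j => if N + 1 ≤ j then (cA N (j - (N+1)) : ℂ) * w ^ j else 0 with hg
  have hcs : Summable c := summable_cA hw N
  have h3 : (fun j => g (j + (N+1))) = fun j => c j * w ^ (N+1) := by
    funext j
    have hif : N + 1 ≤ j + (N + 1) := by omega
    rw [hg]
    simp only
    rw [if_pos hif, Nat.add_sub_cancel, hc]
    simp only
    rw [pow_add]
    ring
  have hgs : Summable g := by
    apply (summable_nat_add_iff (N+1)).mp
    rw [h3]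
    exact hcs.mul_right _
  have hterm : ∀ j, (cA (N + 1) j : ℂ) * w ^ j = c j - g j := by
    intro j
    rw [hc, hg]
    simp only
    rcases Nat.lt_or_ge j (N+1) with hj | hj
    · rw [if_neg (by omega)]
      rcases Nat.eq_zero_or_pos j with rfl | hjpos
      · rw [cA_zero_right, cA_zero_right]; ring
      · rw [cA_eq_zero hjpos (by omega), cA_eq_zero hjpos (by omega)]; ring
    · rw [if_pos hj]
      have := cA_rec (N := N) (j := j) hj
      have hcast : (cA (N+1) j : ℂ) = (cA N j : ℂ) - (cA N (j - (N+1)) : ℂ) := by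
        rw [this]; push_cast; ring
      rw [hcast]; ring
  have hsum : (∑' j : ℕ, (cA (N + 1) j : ℂ) * w ^ j) = ∑' j, (c j - g j) := by
    congr 1; funext j; exact hterm j
  rw [hsum, Summable.tsum_sub hcs hgs]
  have hgsum : ∑' j, g j = (∑' j, c j) * w ^ (N + 1) := by
    have h1 := Summable.sum_add_tsum_nat_add (f := g) (N+1) hgs
    have h2 : ∑ i ∈ Finset.range (N+1), g i = 0 := by
      apply Finset.sum_eq_zero
      intro i hi
      rw [hg]
      simp only
      rw [if_neg (by simp at hi; omega)]
    rw [← h1, h2, zero_add]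
    rw [show (∑' j, g (j + (N+1))) = ∑' j, c j * w ^ (N+1) from by rw [h3]]
    exact tsum_mul_right
  rw [hgsum]
  ring

lemma LL_prod (N : ℕ) :
    (∑' j : ℕ, (cA N j : ℂ) * w ^ j)
      = (∑' j : ℕ, (cA 0 j : ℂ) * w ^ j) * ∏ k ∈ Finset.range N, (1 - w ^ (k + 1)) := by
  induction N with
  | zero => simp
  | succ n ih =>
    rw [LL_succ hw n, ih, Finset.prod_range_succ]
    ring

lemma L_ne_zero : (∑' j : ℕ, (P j : ℂ) * w ^ j) ≠ 0 := by
  have hP0 : (∑' j : ℕ, (P j : ℂ) * w ^ j) = ∑' j : ℕ, (cA 0 j : ℂ) * w ^ j := by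
    congr 1; funext j; rw [cA_zero]
  rw [hP0]
  intro h0
  -- tails of the summable series tend to zero
  set gP : ℕ → ℝ := fun j => (P j : ℝ) * ‖w‖ ^ j with hgP
  have hgPs : Summable gP := summable_P (norm_nonneg w) hw
  have htail : Tendsto (fun N => ∑' j, gP (j + N)) atTop (nhds 0) := tendsto_sum_nat_add gP
  have hev : ∀ᶠ N : ℕ in atTop, ∑' j, gP (j + N) < 1/2 :=
    htail.eventually_lt_const (by norm_num)
  obtain ⟨N, hN, hN1⟩ := (hev.and (eventually_ge_atTop 1)).exists
  set M := N - 1 with hM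
  have hMN : M + 1 = N := by omega
  set f : ℕ → ℂ := fun j => (cA M j : ℂ) * w ^ j with hf
  have hfs : Summable f := summable_cA hw M
  have hhead : ∑ i ∈ Finset.range (M+1), f i = 1 := by
    rw [Finset.sum_eq_single_of_mem 0 (by simp)]
    · rw [hf]; simp [cA_zero_right]
    · intro i hi hne
      have hiM : i ≤ M := Nat.lt_succ_iff.mp (Finset.mem_range.mp hi)
      rw [hf]
      simp only
      rw [cA_eq_zero (Nat.pos_of_ne_zero hne) hiM]
      simp
  have hsplit := Summable.sum_add_tsum_nat_add (f := f) (M+1) hfs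
  have hLM0 : (∑' j, f j) = 0 := by
    rw [hf, LL_prod hw M, h0]
    ring
  have hnorm : ‖(∑' j : ℕ, f (j + (M+1)))‖ ≤ ∑' j : ℕ, gP (j + (M+1)) := by
    have hgPtail : Summable (fun j => gP (j + (M+1))) := (summable_nat_add_iff (M+1)).mpr hgPs
    have hbound : ∀ j : ℕ, ‖f (j + (M+1))‖ ≤ gP (j + (M+1)) := by
      intro j
      rw [hf, hgP]
      simp only [norm_mul, norm_pow, Complex.norm_natCast]
      exact mul_le_mul_of_nonneg_right (by exact_mod_cast cA_le_P M _) (by positivity)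
    have hfn : Summable (fun j => ‖f (j + (M+1))‖) :=
      Summable.of_nonneg_of_le (fun j => norm_nonneg _) hbound hgPtail
    calc ‖(∑' j : ℕ, f (j + (M+1)))‖ ≤ ∑' j : ℕ, ‖f (j + (M+1))‖ := norm_tsum_le_tsum_norm hfn
      _ ≤ ∑' j : ℕ, gP (j + (M+1)) := Summable.tsum_le_tsum hbound hfn hgPtail
  rw [hLM0, hhead] at hsplit
  -- hsplit : 1 + ∑' j, f (j + (M+1)) = 0
  have : ‖(∑' j : ℕ, f (j + (M+1)))‖ = 1 := by
    have : (∑' j : ℕ, f (j + (M+1))) = -1 := by linear_combination hsplit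
    rw [this]; simp
  rw [this] at hnorm
  rw [hMN] at hnorm
  linarith


end PartitionAux

open PartitionAux in
set_option maxHeartbeats 1000000 in
/-- Outside the unit disk, `(1/n)·ln|Fₙ(z)| → ln|z|`. -/
theorem log_abs_partition_poly_outside (z : ℂ) (hz : 1 < ‖z‖) :
    Tendsto (fun n : ℕ => Real.log ‖F n z‖ / n) atTop (nhds (Real.log ‖z‖)) := by
  have hz0 : z ≠ 0 := by
    intro h; rw [h] at hz; simp at hz; linarith
  set w : ℂ := z⁻¹ with hwdef
  have hw : ‖w‖ < 1 := by
    rw [hwdef, norm_inv]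
    exact inv_lt_one_of_one_lt₀ hz
  have hw0 : (0:ℝ) ≤ ‖w‖ := norm_nonneg _
  set gP : ℕ → ℝ := fun j => (P j : ℝ) * ‖w‖ ^ j with hgP
  have hgPs : Summable gP := summable_P hw0 hw
  set a : ℕ → ℂ := fun n => ∑' j : ℕ, (partsCount (n - j) n : ℂ) * w ^ j with ha
  -- basic coefficient bound
  have cbound : ∀ n : ℕ, 1 ≤ n → ∀ j : ℕ, partsCount (n - j) n ≤ P j := by
    intro n hn j
    rcases le_or_gt j n with hj | hj
    · exact partsCount_le_P j n hj
    · have : n - j = 0 := by omega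
      rw [this, partsCount_zero n hn]
      exact Nat.zero_le _
  have normterm : ∀ n : ℕ, 1 ≤ n → ∀ j : ℕ,
      ‖(partsCount (n - j) n : ℂ) * w ^ j‖ ≤ gP j := by
    intro n hn j
    rw [norm_mul, norm_pow, Complex.norm_natCast, hgP]
    exact mul_le_mul_of_nonneg_right (by exact_mod_cast cbound n hn j) (by positivity)
  have summable_a : ∀ n : ℕ, 1 ≤ n → Summable (fun j : ℕ => (partsCount (n - j) n : ℂ) * w ^ j) := by
    intro n hn
    apply Summable.of_norm
    exact Summable.of_nonneg_of_le (fun j => norm_nonneg _) (normterm n hn) hgPs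
  -- F n z = z ^ n * a n
  have hFa : ∀ n : ℕ, 1 ≤ n → F n z = z ^ n * a n := by
    intro n hn
    have hfin : a n = ∑ j ∈ Finset.range n, (partsCount (n - j) n : ℂ) * w ^ j := by
      rw [ha]
      apply tsum_eq_sum
      intro j hj
      rw [Finset.mem_range] at hj
      push_neg at hj
      have : n - j = 0 := by omega
      rw [this, partsCount_zero n hn]
      simp
    rw [hfin, Finset.mul_sum, F]
    apply Finset.sum_bij' (i := fun k _ => n - k) (j := fun j _ => n - j)
    · intro k hk
      rw [Finset.mem_Icc] at hk
      rw [Finset.mem_range]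
      omega
    · intro j hj
      rw [Finset.mem_range] at hj
      rw [Finset.mem_Icc]
      omega
    · intro k hk
      rw [Finset.mem_Icc] at hk
      omega
    · intro j hj
      rw [Finset.mem_range] at hj
      omega
    · intro k hk
      rw [Finset.mem_Icc] at hk
      have hnk : n - (n - k) = k := by omega
      rw [hnk]
      have hzw : z ^ n * w ^ (n - k) = z ^ k := by
        rw [hwdef, inv_pow]
        have : z ^ n = z ^ k * z ^ (n - k) := by
          rw [← pow_add]
          congr 1
          omega
        rw [this]
        field_simp
      rw [← hzw]
      ring
  set L : ℂ := ∑' j : ℕ, (P j : ℂ) * w ^ j with hL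
  have hsumP : Summable (fun j : ℕ => (P j : ℂ) * w ^ j) := by
    apply Summable.of_norm
    apply Summable.of_nonneg_of_le (fun j => norm_nonneg _) (f := gP)
    · intro j
      rw [norm_mul, norm_pow, Complex.norm_natCast, hgP]
    · exact hgPs
  -- convergence a n → L
  have hconv : Tendsto a atTop (nhds L) := by
    rw [tendsto_iff_norm_sub_tendsto_zero]
    set tail : ℕ → ℝ := fun m => ∑' j : ℕ, gP (j + m) with htaildef
    have htail0 : Tendsto tail atTop (nhds 0) := tendsto_sum_nat_add gP
    have hhalf : Tendsto (fun n : ℕ => n / 2 + 1) atTop atTop :=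
      Filter.tendsto_atTop_atTop.2 (fun b => ⟨2 * b, fun n hn => by omega⟩)
    have hkey : ∀ n : ℕ, 1 ≤ n → ‖a n - L‖ ≤ 2 * tail (n / 2 + 1) := by
      intro n hn
      set u : ℕ → ℂ := fun j => ((partsCount (n - j) n : ℂ) - (P j : ℂ)) * w ^ j with hu
      have hus : Summable u := by
        have : u = fun j => (partsCount (n - j) n : ℂ) * w ^ j - (P j : ℂ) * w ^ j := by
          funext j; rw [hu]; ring
        rw [this]
        exact (summable_a n hn).sub hsumP
      have haL : a n - L = ∑' j, u j := by
        rw [ha, hL, ← Summable.tsum_sub (summable_a n hn) hsumP]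
        congr 1; funext j; ring
      have hub : ∀ j : ℕ, ‖u j‖ ≤ 2 * gP j := by
        intro j
        have h1 : ‖u j‖ ≤ ‖(partsCount (n - j) n : ℂ) * w ^ j‖ + ‖(P j : ℂ) * w ^ j‖ := by
          have : u j = (partsCount (n - j) n : ℂ) * w ^ j - (P j : ℂ) * w ^ j := by
            rw [hu]; ring
          rw [this]
          exact norm_sub_le _ _
        have h2 : ‖(P j : ℂ) * w ^ j‖ = gP j := by
          rw [norm_mul, norm_pow, Complex.norm_natCast, hgP]
        have h3 := normterm n hn j
        rw [h2] at h1
        linarith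
      have huzero : ∀ j : ℕ, j < n / 2 + 1 → u j = 0 := by
        intro j hj
        have h2j : 2 * j ≤ n := by
          have := Nat.lt_succ_iff.mp hj
          have := Nat.div_mul_le_self n 2
          omega
        have heq : partsCount (n - j) n = P j := partsCount_eq_P j n h2j
        rw [hu]
        simp only [heq]
        ring
      have hgPs2 : Summable (fun j => 2 * gP j) := hgPs.mul_left 2
      have husn : Summable (fun j => ‖u j‖) :=
        Summable.of_nonneg_of_le (fun j => norm_nonneg _) hub hgPs2
      calc ‖a n - L‖ = ‖∑' j, u j‖ := by rw [haL]
        _ ≤ ∑' j, ‖u j‖ := norm_tsum_le_tsum_norm husn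
        _ = ∑ i ∈ Finset.range (n / 2 + 1), ‖u i‖ + ∑' j, ‖u (j + (n / 2 + 1))‖ :=
            (Summable.sum_add_tsum_nat_add _ husn).symm
        _ ≤ 0 + ∑' j, 2 * gP (j + (n / 2 + 1)) := by
            apply add_le_add
            · apply le_of_eq
              apply Finset.sum_eq_zero
              intro i hi
              rw [huzero i (Finset.mem_range.mp hi)]
              simp
            · apply Summable.tsum_le_tsum (fun j => hub _)
              · exact (summable_nat_add_iff _).mpr husn
              · exact (summable_nat_add_iff _).mpr hgPs2
        _ = 2 * tail (n / 2 + 1) := by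
            rw [zero_add, htaildef]
            exact tsum_mul_left
    have htail2 : Tendsto (fun n : ℕ => 2 * tail (n / 2 + 1)) atTop (nhds 0) := by
      have := (htail0.comp hhalf).const_mul (2:ℝ)
      simpa using this
    apply tendsto_of_tendsto_of_tendsto_of_le_of_le' tendsto_const_nhds htail2
    · exact Eventually.of_forall (fun n => norm_nonneg _)
    · filter_upwards [eventually_ge_atTop 1] with n hn
      exact hkey n hn
  have hLne : L ≠ 0 := L_ne_zero hw
  -- final assembly
  have hanorm : Tendsto (fun n => ‖a n‖) atTop (nhds ‖L‖) := hconv.norm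
  have hlog : Tendsto (fun n => Real.log ‖a n‖) atTop (nhds (Real.log ‖L‖)) :=
    (Real.continuousAt_log (norm_ne_zero_iff.mpr hLne)).tendsto.comp hanorm
  have hdiv : Tendsto (fun n : ℕ => Real.log ‖a n‖ / n) atTop (nhds 0) := by
    have := hlog.mul tendsto_inv_atTop_nhds_zero_nat
    simp only [mul_zero] at this
    apply this.congr
    intro n
    rw [div_eq_mul_inv]
  have hane : ∀ᶠ n : ℕ in atTop, a n ≠ 0 := hconv.eventually_ne hLne
  have hfinal : Tendsto (fun n : ℕ => Real.log ‖z‖ + Real.log ‖a n‖ / n) atTop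
      (nhds (Real.log ‖z‖)) := by
    have h := Tendsto.add (tendsto_const_nhds (x := Real.log ‖z‖) (f := atTop (α := ℕ))) hdiv
    rw [add_zero] at h
    exact h
  apply Tendsto.congr' _ hfinal
  filter_upwards [hane, eventually_ge_atTop 1] with n hanz hn
  have hFzn : F n z = z ^ n * a n := hFa n hn
  have hnz : ‖z‖ ≠ 0 := by positivity
  have hanz' : ‖a n‖ ≠ 0 := norm_ne_zero_iff.mpr hanz
  have hnR : (0:ℝ) < (n:ℝ) := by exact_mod_cast hn
  rw [hFzn, norm_mul, norm_pow, Real.log_mul (by positivity) hanz', Real.log_pow]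
  rw [add_div]
  congr 1
  rw [mul_comm, mul_div_assoc, div_self (ne_of_gt hnR), mul_one]
end
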